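/- arXiv:1102.3359 — 2 statements merged into one kernel-verified Lean document; each statement's English description precedes it below -/
import Mathlib

section
/- The number of involutions of length n avoiding both 3412 and 132 is the Fibonacci number F_{n+1} (with F₁=F₂=1), i.e., the generating function is f(x) = x(1+x)/(1−x−x²), giving the sequence 1, 2, 3, 5, 8, 13, …. -/
open Equiv Finset

def Avoids4321 {n : ℕ} (π : Equiv.Perm (Fin n)) : Prop :=
  ¬ ∃ a b c d : Fin n, a < b ∧ b < c ∧ c < d ∧ π d < π c ∧ π c < π b ∧ π b < π a

def Avoids321 {n : ℕ} (π : Equiv.Perm (Fin n)) : Prop :=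
  ¬ ∃ a b c : Fin n, a < b ∧ b < c ∧ π c < π b ∧ π b < π a

def Avoids132 {n : ℕ} (π : Equiv.Perm (Fin n)) : Prop :=
  ¬ ∃ a b c : Fin n, a < b ∧ b < c ∧ π a < π c ∧ π c < π b

def Avoids312 {n : ℕ} (π : Equiv.Perm (Fin n)) : Prop :=
  ¬ ∃ a b c : Fin n, a < b ∧ b < c ∧ π b < π c ∧ π c < π a

def Avoids3412 {n : ℕ} (π : Equiv.Perm (Fin n)) : Prop :=
  ¬ ∃ a b c d : Fin n, a < b ∧ b < c ∧ c < d ∧ π c < π d ∧ π d < π a ∧ π a < π b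

/-- The image of the index interval `[a,b]` under `π` is a contiguous set of values. -/
def IsIntervalImage {n : ℕ} (π : Equiv.Perm (Fin n)) (a b : Fin n) : Prop :=
  ∀ i j k : Fin n, a ≤ i → i ≤ b → a ≤ j → j ≤ b → π i ≤ k → k ≤ π j →
    ∃ m : Fin n, a ≤ m ∧ m ≤ b ∧ π m = k

/-- A permutation is simple if its only intervals are the singletons and the whole interval. -/
def IsSimplePerm {n : ℕ} (π : Equiv.Perm (Fin n)) : Prop :=
  ∀ a b : Fin n, a < b → IsIntervalImage π a b → a.val = 0 ∧ b.val = n - 1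

/-- A permutation is connected (sum-indecomposable). -/
def IsConnectedPerm {n : ℕ} (π : Equiv.Perm (Fin n)) : Prop :=
  ¬ ∃ k : ℕ, 0 < k ∧ k < n ∧ ∀ i : Fin n, i.val < k → (π i).val < k

/-- The step of the Motzkin path associated to an involution at position `i`:
horizontal (0) at a fixed point, up (1) at an excedance, down (-1) at a deficiency. -/
def invStep {n : ℕ} (π : Equiv.Perm (Fin n)) (i : Fin n) : ℤ :=
  if π i = i then 0 else if i < π i then 1 else -1

/-- The height of the associated Motzkin path after the first `k` steps. -/
def heightUpTo {n : ℕ} (π : Equiv.Perm (Fin n)) (k : ℕ) : ℤ :=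
  ∑ i ∈ Finset.univ.filter (fun i : Fin n => i.val < k), invStep π i

/-- A Motzkin path, as its list of steps. -/
def IsMotzkinPath (l : List ℤ) : Prop :=
  (∀ s ∈ l, s = 1 ∨ s = 0 ∨ s = -1) ∧ l.sum = 0 ∧ ∀ p : List ℤ, p <+: l → 0 ≤ p.sum

/-- Number of involutions of length `n` avoiding 3412 and 132. -/
noncomputable def count3412x132 (n : ℕ) : ℕ :=
  Nat.card {π : Equiv.Perm (Fin n) // Function.Involutive ⇑π ∧ Avoids3412 π ∧
    Avoids132 π}

def ext1 {n : ℕ} (π : Perm (Fin n)) : Perm (Fin (n+1)) where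
  toFun := Fin.lastCases (Fin.last n) (fun i => (π i).castSucc)
  invFun := Fin.lastCases (Fin.last n) (fun i => (π.symm i).castSucc)
  left_inv := by
    intro i
    cases i using Fin.lastCases with
    | last => simp
    | cast i => simp
  right_inv := by
    intro i
    cases i using Fin.lastCases with
    | last => simp
    | cast i => simp

@[simp] lemma ext1_last {n : ℕ} (π : Perm (Fin n)) : ext1 π (Fin.last n) = Fin.last n := by
  simp [ext1]

@[simp] lemma ext1_castSucc {n : ℕ} (π : Perm (Fin n)) (i : Fin n) :
    ext1 π i.castSucc = (π i).castSucc := by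
  simp [ext1]

def wrap {n : ℕ} (π : Perm (Fin n)) : Perm (Fin (n+2)) where
  toFun := Fin.cases (Fin.last (n+1)) (Fin.lastCases 0 (fun i => ((π i).castSucc).succ))
  invFun := Fin.cases (Fin.last (n+1)) (Fin.lastCases 0 (fun i => ((π.symm i).castSucc).succ))
  left_inv := by
    intro i
    cases i using Fin.cases with
    | zero => simp only [← Fin.succ_last, Fin.cases_zero, Fin.cases_succ, Fin.lastCases_last,
        Fin.lastCases_castSucc, Equiv.symm_apply_apply, Equiv.apply_symm_apply]
    | succ j =>
      cases j using Fin.lastCases with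
      | last => simp only [← Fin.succ_last, Fin.cases_zero, Fin.cases_succ, Fin.lastCases_last,
        Fin.lastCases_castSucc, Equiv.symm_apply_apply, Equiv.apply_symm_apply]
      | cast k => simp only [← Fin.succ_last, Fin.cases_zero, Fin.cases_succ, Fin.lastCases_last,
        Fin.lastCases_castSucc, Equiv.symm_apply_apply, Equiv.apply_symm_apply]
  right_inv := by
    intro i
    cases i using Fin.cases with
    | zero => simp only [← Fin.succ_last, Fin.cases_zero, Fin.cases_succ, Fin.lastCases_last,
        Fin.lastCases_castSucc, Equiv.symm_apply_apply, Equiv.apply_symm_apply]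
    | succ j =>
      cases j using Fin.lastCases with
      | last => simp only [← Fin.succ_last, Fin.cases_zero, Fin.cases_succ, Fin.lastCases_last,
        Fin.lastCases_castSucc, Equiv.symm_apply_apply, Equiv.apply_symm_apply]
      | cast k => simp only [← Fin.succ_last, Fin.cases_zero, Fin.cases_succ, Fin.lastCases_last,
        Fin.lastCases_castSucc, Equiv.symm_apply_apply, Equiv.apply_symm_apply]

@[simp] lemma wrap_zero {n : ℕ} (π : Perm (Fin n)) : wrap π 0 = Fin.last (n+1) := by
  simp [wrap]

@[simp] lemma wrap_last {n : ℕ} (π : Perm (Fin n)) : wrap π (Fin.last (n+1)) = 0 := by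
  simp only [wrap, Equiv.coe_fn_mk, ← Fin.succ_last, Fin.cases_succ, Fin.lastCases_last]

@[simp] lemma wrap_mid {n : ℕ} (π : Perm (Fin n)) (i : Fin n) :
    wrap π (i.castSucc.succ) = ((π i).castSucc).succ := by
  simp only [wrap, Equiv.coe_fn_mk, Fin.cases_succ, Fin.lastCases_castSucc]

def res1 {n : ℕ} (σ : Perm (Fin (n+1))) (h : σ (Fin.last n) = Fin.last n) : Perm (Fin n) where
  toFun i := (σ i.castSucc).castPred (by
    intro hc
    exact absurd (σ.injective (hc.trans h.symm)) (Fin.castSucc_lt_last i).ne)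
  invFun i := (σ.symm i.castSucc).castPred (by
    intro hc
    have : i.castSucc = Fin.last n := by
      have := congrArg σ hc
      rwa [Equiv.apply_symm_apply, h] at this
    exact absurd this (Fin.castSucc_lt_last i).ne)
  left_inv := by intro i; simp
  right_inv := by intro i; simp

@[simp] lemma res1_apply {n : ℕ} (σ : Perm (Fin (n+1))) (h) (i : Fin n) :
    (res1 σ h i).castSucc = σ i.castSucc := by
  simp [res1]

lemma ext1_res1 {n : ℕ} (σ : Perm (Fin (n+1))) (h : σ (Fin.last n) = Fin.last n) :
    ext1 (res1 σ h) = σ := by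
  ext i
  cases i using Fin.lastCases with
  | last => simp [h]
  | cast i => rw [ext1_castSucc, res1_apply]

lemma res1_ext1 {n : ℕ} (π : Perm (Fin n)) (h) : res1 (ext1 π) h = π := by
  ext i
  have := res1_apply (ext1 π) h i
  rw [ext1_castSucc] at this
  exact congrArg Fin.val (Fin.castSucc_injective _ this)

section
variable {n : ℕ}

lemma mid_ne_zero {n : ℕ} (i : Fin n) : (i.castSucc.succ : Fin (n+1+1)) ≠ 0 := Fin.succ_ne_zero _

lemma mid_ne_last (i : Fin n) : (i.castSucc.succ : Fin (n+2)) ≠ Fin.last (n+1) := by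
  rw [← Fin.succ_last]
  exact fun h => absurd (Fin.succ_injective _ h) (Fin.castSucc_lt_last i).ne

/-- representation of middle elements -/
lemma mid_rep {x : Fin (n+2)} (h0 : x ≠ 0) (hl : x ≠ Fin.last (n+1)) :
    ∃ k : Fin n, k.castSucc.succ = x := by
  refine ⟨(x.pred h0).castPred ?_, ?_⟩
  · intro hc
    apply hl
    rw [← Fin.succ_pred x h0, hc, Fin.succ_last]
  · rw [Fin.castSucc_castPred, Fin.succ_pred]

def res2 (σ : Perm (Fin (n+2))) (h0 : σ 0 = Fin.last (n+1)) (hl : σ (Fin.last (n+1)) = 0) :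
    Perm (Fin n) where
  toFun i := ((σ i.castSucc.succ).pred (by
      intro hc; exact absurd (σ.injective (hc.trans hl.symm)) (mid_ne_last i))).castPred (by
      intro hc
      have : σ i.castSucc.succ = Fin.last (n+1) := by
        rw [← Fin.succ_pred (σ i.castSucc.succ) _, hc, Fin.succ_last]
        exact fun hc' => absurd (σ.injective (hc'.trans hl.symm)) (mid_ne_last i)
      exact absurd (σ.injective (this.trans h0.symm)) (mid_ne_zero i))
  invFun i := ((σ.symm i.castSucc.succ).pred (by
      intro hc
      have := congrArg σ hc
      rw [Equiv.apply_symm_apply, h0] at this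
      exact absurd this (mid_ne_last i))).castPred (by
      intro hc
      have : σ.symm i.castSucc.succ = Fin.last (n+1) := by
        rw [← Fin.succ_pred (σ.symm i.castSucc.succ) _, hc, Fin.succ_last]
        exact fun hc' => absurd ((σ.apply_symm_apply _).symm.trans ((congrArg σ hc').trans h0))
          (mid_ne_last i)
      have := congrArg σ this
      rw [Equiv.apply_symm_apply, hl] at this
      exact absurd this (mid_ne_zero i))
  left_inv := by
    intro i
    simp only [Fin.castSucc_castPred, Fin.succ_pred, Equiv.symm_apply_apply, Fin.pred_succ,
      Fin.castPred_castSucc]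
  right_inv := by
    intro i
    simp only [Fin.castSucc_castPred, Fin.succ_pred, Equiv.apply_symm_apply, Fin.pred_succ,
      Fin.castPred_castSucc]

@[simp] lemma res2_apply (σ : Perm (Fin (n+2))) (h0 hl) (i : Fin n) :
    ((res2 σ h0 hl i).castSucc).succ = σ i.castSucc.succ := by
  simp only [res2, Equiv.coe_fn_mk, Fin.castSucc_castPred, Fin.succ_pred]

end

section
variable {n : ℕ}

lemma res2_wrap (π : Perm (Fin n)) (h0 hl) : res2 (wrap π) h0 hl = π := by
  ext i
  have := res2_apply (wrap π) h0 hl i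
  rw [wrap_mid] at this
  exact congrArg Fin.val (Fin.castSucc_injective _ (Fin.succ_injective _ this))

lemma wrap_res2 (σ : Perm (Fin (n+2))) (h0 : σ 0 = Fin.last (n+1))
    (hl : σ (Fin.last (n+1)) = 0) : wrap (res2 σ h0 hl) = σ := by
  ext i
  cases i using Fin.cases with
  | zero => rw [wrap_zero, h0]
  | succ j =>
    cases j using Fin.lastCases with
    | last => rw [Fin.succ_last, wrap_last, hl]
    | cast k => rw [wrap_mid, res2_apply]

end

section
variable {n : ℕ} {π : Perm (Fin n)}

lemma involutive_ext1 (h : Function.Involutive ⇑π) : Function.Involutive ⇑(ext1 π) := by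
  intro i
  cases i using Fin.lastCases with
  | last => rw [ext1_last, ext1_last]
  | cast i => rw [ext1_castSucc, ext1_castSucc, h i]

lemma involutive_of_ext1 (h : Function.Involutive ⇑(ext1 π)) : Function.Involutive ⇑π := by
  intro i
  have := h i.castSucc
  rw [ext1_castSucc, ext1_castSucc] at this
  exact Fin.castSucc_injective _ this

lemma involutive_wrap (h : Function.Involutive ⇑π) : Function.Involutive ⇑(wrap π) := by
  intro i
  cases i using Fin.cases with
  | zero => rw [wrap_zero, wrap_last]
  | succ j =>
    cases j using Fin.lastCases with
    | last => rw [Fin.succ_last, wrap_last, wrap_zero]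
    | cast k => rw [Fin.succ_castSucc, ← Fin.succ_castSucc, wrap_mid, wrap_mid, h k]

lemma involutive_of_wrap (h : Function.Involutive ⇑(wrap π)) : Function.Involutive ⇑π := by
  intro i
  have := h i.castSucc.succ
  rw [wrap_mid, wrap_mid] at this
  exact Fin.castSucc_injective _ (Fin.succ_injective _ this)

lemma avoids132_ext1 (h : Avoids132 π) : Avoids132 (ext1 π) := by
  rintro ⟨a, b, c, hab, hbc, h1, h2⟩
  have hc : c ≠ Fin.last n := by
    rintro rfl; rw [ext1_last] at h2; exact absurd h2 (LE.le.not_gt (Fin.le_last _))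
  have hcl : c < Fin.last n := hc.lt_of_le (Fin.le_last _)
  obtain ⟨c', rfl⟩ : ∃ c', Fin.castSucc c' = c := ⟨c.castPred hc, Fin.castSucc_castPred _ _⟩
  obtain ⟨b', rfl⟩ : ∃ b', Fin.castSucc b' = b :=
    ⟨b.castPred (hbc.trans hcl).ne, Fin.castSucc_castPred _ _⟩
  obtain ⟨a', rfl⟩ : ∃ a', Fin.castSucc a' = a :=
    ⟨a.castPred ((hab.trans hbc).trans hcl).ne, Fin.castSucc_castPred _ _⟩
  rw [Fin.castSucc_lt_castSucc_iff] at hab hbc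
  rw [ext1_castSucc, ext1_castSucc, Fin.castSucc_lt_castSucc_iff] at h1 h2
  exact h ⟨a', b', c', hab, hbc, h1, h2⟩

lemma avoids132_of_ext1 (h : Avoids132 (ext1 π)) : Avoids132 π := by
  rintro ⟨a, b, c, hab, hbc, h1, h2⟩
  refine h ⟨a.castSucc, b.castSucc, c.castSucc, ?_, ?_, ?_, ?_⟩ <;>
    simp only [ext1_castSucc, Fin.castSucc_lt_castSucc_iff] <;> assumption

lemma avoids3412_ext1 (h : Avoids3412 π) : Avoids3412 (ext1 π) := by
  rintro ⟨a, b, c, d, hab, hbc, hcd, h1, h2, h3⟩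
  have hd : d ≠ Fin.last n := by
    rintro rfl; rw [ext1_last] at h2; exact absurd h2 (LE.le.not_gt (Fin.le_last _))
  have hdl : d < Fin.last n := hd.lt_of_le (Fin.le_last _)
  obtain ⟨d', rfl⟩ : ∃ d', Fin.castSucc d' = d := ⟨d.castPred hd, Fin.castSucc_castPred _ _⟩
  obtain ⟨c', rfl⟩ : ∃ c', Fin.castSucc c' = c :=
    ⟨c.castPred (hcd.trans hdl).ne, Fin.castSucc_castPred _ _⟩
  obtain ⟨b', rfl⟩ : ∃ b', Fin.castSucc b' = b :=
    ⟨b.castPred ((hbc.trans hcd).trans hdl).ne, Fin.castSucc_castPred _ _⟩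
  obtain ⟨a', rfl⟩ : ∃ a', Fin.castSucc a' = a :=
    ⟨a.castPred (((hab.trans hbc).trans hcd).trans hdl).ne, Fin.castSucc_castPred _ _⟩
  rw [Fin.castSucc_lt_castSucc_iff] at hab hbc hcd
  rw [ext1_castSucc, ext1_castSucc, Fin.castSucc_lt_castSucc_iff] at h1 h2 h3
  exact h ⟨a', b', c', d', hab, hbc, hcd, h1, h2, h3⟩

lemma avoids3412_of_ext1 (h : Avoids3412 (ext1 π)) : Avoids3412 π := by
  rintro ⟨a, b, c, d, hab, hbc, hcd, h1, h2, h3⟩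
  refine h ⟨a.castSucc, b.castSucc, c.castSucc, d.castSucc, ?_, ?_, ?_, ?_, ?_, ?_⟩ <;>
    simp only [ext1_castSucc, Fin.castSucc_lt_castSucc_iff] <;> assumption

lemma midlt {a b : Fin n} :
    (a.castSucc.succ : Fin (n+2)) < b.castSucc.succ ↔ a < b := by
  rw [Fin.succ_lt_succ_iff, Fin.castSucc_lt_castSucc_iff]

lemma avoids132_wrap (h : Avoids132 π) : Avoids132 (wrap π) := by
  rintro ⟨a, b, c, hab, hbc, h1, h2⟩
  have ha0 : a ≠ 0 := by
    rintro rfl; rw [wrap_zero] at h1; exact absurd h1 (LE.le.not_gt (Fin.le_last _))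
  have hcl : c ≠ Fin.last (n+1) := by
    rintro rfl; rw [wrap_last] at h1; exact absurd h1 (Fin.not_lt_zero _)
  have hclt : c < Fin.last (n+1) := hcl.lt_of_le (Fin.le_last _)
  have hapos : (0 : Fin (n+2)) < a := Fin.pos_of_ne_zero ha0
  obtain ⟨c', rfl⟩ := mid_rep (hapos.trans (hab.trans hbc)).ne' hcl
  obtain ⟨b', rfl⟩ := mid_rep (hapos.trans hab).ne' (hbc.trans hclt).ne
  obtain ⟨a', rfl⟩ := mid_rep ha0 ((hab.trans hbc).trans hclt).ne
  rw [midlt] at hab hbc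
  rw [wrap_mid, wrap_mid, midlt] at h1 h2
  exact h ⟨a', b', c', hab, hbc, h1, h2⟩

lemma avoids132_of_wrap (h : Avoids132 (wrap π)) : Avoids132 π := by
  rintro ⟨a, b, c, hab, hbc, h1, h2⟩
  refine h ⟨a.castSucc.succ, b.castSucc.succ, c.castSucc.succ, ?_, ?_, ?_, ?_⟩ <;>
    simp only [wrap_mid, midlt] <;> assumption

lemma avoids3412_wrap (h : Avoids3412 π) : Avoids3412 (wrap π) := by
  rintro ⟨a, b, c, d, hab, hbc, hcd, h1, h2, h3⟩
  have ha0 : a ≠ 0 := by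
    rintro rfl; rw [wrap_zero] at h3; exact absurd h3 (LE.le.not_gt (Fin.le_last _))
  have hdl : d ≠ Fin.last (n+1) := by
    rintro rfl; rw [wrap_last] at h1; exact absurd h1 (Fin.not_lt_zero _)
  have hdlt : d < Fin.last (n+1) := hdl.lt_of_le (Fin.le_last _)
  have hapos : (0 : Fin (n+2)) < a := Fin.pos_of_ne_zero ha0
  obtain ⟨d', rfl⟩ := mid_rep (hapos.trans ((hab.trans hbc).trans hcd)).ne' hdl
  obtain ⟨c', rfl⟩ := mid_rep (hapos.trans (hab.trans hbc)).ne' (hcd.trans hdlt).ne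
  obtain ⟨b', rfl⟩ := mid_rep (hapos.trans hab).ne' ((hbc.trans hcd).trans hdlt).ne
  obtain ⟨a', rfl⟩ := mid_rep ha0 (((hab.trans hbc).trans hcd).trans hdlt).ne
  simp only [midlt] at hab hbc hcd
  simp only [wrap_mid, midlt] at h1 h2 h3
  exact h ⟨a', b', c', d', hab, hbc, hcd, h1, h2, h3⟩

lemma avoids3412_of_wrap (h : Avoids3412 (wrap π)) : Avoids3412 π := by
  rintro ⟨a, b, c, d, hab, hbc, hcd, h1, h2, h3⟩
  refine h ⟨a.castSucc.succ, b.castSucc.succ, c.castSucc.succ, d.castSucc.succ,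
    ?_, ?_, ?_, ?_, ?_, ?_⟩ <;> simp only [wrap_mid, midlt] <;> assumption

end

section
variable {n : ℕ}

lemma dichotomy (σ : Perm (Fin (n+2))) (hinv : Function.Involutive ⇑σ)
    (h3412 : Avoids3412 σ) (h132 : Avoids132 σ) :
    σ (Fin.last (n+1)) = Fin.last (n+1) ∨ σ (Fin.last (n+1)) = 0 := by
  by_contra hcon
  push_neg at hcon
  obtain ⟨hk1, hk0⟩ := hcon
  set L := Fin.last (n+1) with hL
  set k := σ L with hkdef
  have hσk : σ k = L := hinv L
  have hkL : k < L := hk1.lt_of_le (Fin.le_last _)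
  have h0k : (0 : Fin (n+2)) < k := Fin.pos_of_ne_zero hk0
  have step1 : ∀ a c : Fin (n+2), a < k → k < c → σ c < σ a := by
    intro a c hak hkc
    by_contra hn
    push_neg at hn
    have h1 : σ a < σ c := hn.lt_of_ne (fun e => (hak.trans hkc).ne (σ.injective e))
    have h2 : σ c < σ k := by
      rw [hσk]
      exact lt_of_le_of_ne (Fin.le_last _) (fun e => hkc.ne' (σ.injective (e.trans hσk.symm)))
    exact h132 ⟨a, k, c, hak, hkc, h1, h2⟩
  have step2 : ∀ c d : Fin (n+2), k < c → c < d → σ d < σ c := by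
    intro c d hkc hcd
    by_contra hn
    push_neg at hn
    have h1 : σ c < σ d := hn.lt_of_ne (fun e => hcd.ne (σ.injective e))
    have h2 : σ d < σ 0 := step1 0 d h0k (hkc.trans hcd)
    have h3 : σ 0 < σ k := by
      rw [hσk]
      exact lt_of_le_of_ne (Fin.le_last _) (fun e => h0k.ne (σ.injective (e.trans hσk.symm)))
    exact h3412 ⟨0, k, c, d, h0k, hkc, hcd, h1, h2, h3⟩
  set m := σ.symm 0 with hm
  have hσm : σ m = 0 := σ.apply_symm_apply 0
  rcases lt_trichotomy m k with h | h | h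
  · have := step1 m L h hkL
    rw [hσm] at this
    exact Fin.not_lt_zero _ this
  · rw [h, hσk] at hσm
    exact absurd hσm Fin.last_pos.ne'
  · have hmL : m < L := by
      refine lt_of_le_of_ne (Fin.le_last _) (fun e => ?_)
      rw [e] at hσm
      exact hk0 (hkdef.trans hσm)
    have := step2 m L h hmL
    rw [hσm] at this
    exact Fin.not_lt_zero _ this

end

def Gd {n : ℕ} (π : Perm (Fin n)) : Prop :=
  Function.Involutive ⇑π ∧ Avoids3412 π ∧ Avoids132 π

section
variable {n : ℕ} {π : Perm (Fin n)}

lemma gd_ext1 (h : Gd π) : Gd (ext1 π) :=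
  ⟨involutive_ext1 h.1, avoids3412_ext1 h.2.1, avoids132_ext1 h.2.2⟩

lemma gd_of_ext1 (h : Gd (ext1 π)) : Gd π :=
  ⟨involutive_of_ext1 h.1, avoids3412_of_ext1 h.2.1, avoids132_of_ext1 h.2.2⟩

lemma gd_wrap (h : Gd π) : Gd (wrap π) :=
  ⟨involutive_wrap h.1, avoids3412_wrap h.2.1, avoids132_wrap h.2.2⟩

lemma gd_of_wrap (h : Gd (wrap π)) : Gd π :=
  ⟨involutive_of_wrap h.1, avoids3412_of_wrap h.2.1, avoids132_of_wrap h.2.2⟩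

end

noncomputable def splitEquiv (n : ℕ) :
    ({π : Perm (Fin (n+1)) // Gd π} ⊕ {π : Perm (Fin n) // Gd π}) ≃
      {σ : Perm (Fin (n+2)) // Gd σ} where
  toFun x := x.elim (fun p => ⟨ext1 p.1, gd_ext1 p.2⟩) (fun p => ⟨wrap p.1, gd_wrap p.2⟩)
  invFun s :=
    if hc : s.1 (Fin.last (n+1)) = Fin.last (n+1) then
      Sum.inl ⟨res1 s.1 hc, gd_of_ext1 (by rw [ext1_res1]; exact s.2)⟩
    else
      Sum.inr ⟨res2 s.1
        (by have h2 := s.2.1 (Fin.last (n+1))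
            rwa [(dichotomy s.1 s.2.1 s.2.2.1 s.2.2.2).resolve_left hc] at h2)
        ((dichotomy s.1 s.2.1 s.2.2.1 s.2.2.2).resolve_left hc),
        gd_of_wrap (by rw [wrap_res2]; exact s.2)⟩
  left_inv := by
    rintro (⟨π, h⟩ | ⟨π, h⟩)
    · simp only [Sum.elim_inl]
      erw [dif_pos (ext1_last π)]
      exact congrArg Sum.inl (Subtype.ext (res1_ext1 π (ext1_last π)))
    · simp only [Sum.elim_inr]
      erw [dif_neg (show ¬ (wrap π (Fin.last (n+1)) = Fin.last (n+1)) by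
        rw [wrap_last]; exact Fin.last_pos.ne)]
      exact congrArg Sum.inr (Subtype.ext (res2_wrap π (wrap_zero π) (wrap_last π)))
  right_inv := by
    rintro ⟨σ, h⟩
    dsimp only
    by_cases hc : σ (Fin.last (n+1)) = Fin.last (n+1)
    · rw [dif_pos hc]
      exact Subtype.ext (ext1_res1 σ hc)
    · rw [dif_neg hc]
      have hl : σ (Fin.last (n+1)) = 0 := (dichotomy σ h.1 h.2.1 h.2.2).resolve_left hc
      have h0 : σ 0 = Fin.last (n+1) := by
        have h2 := h.1 (Fin.last (n+1)); rwa [hl] at h2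
      exact Subtype.ext (wrap_res2 σ h0 hl)


lemma count_rec (n : ℕ) :
    count3412x132 (n+2) = count3412x132 (n+1) + count3412x132 n := by
  have h1 : count3412x132 (n+2) =
      Nat.card ({π : Perm (Fin (n+1)) // Gd π} ⊕ {π : Perm (Fin n) // Gd π}) :=
    (Nat.card_congr (splitEquiv n)).symm
  rw [h1, Nat.card_sum]
  rfl

lemma gd_one (n : ℕ) (hn : n ≤ 1) : Gd (1 : Perm (Fin n)) := by
  refine ⟨fun i => rfl, ?_, ?_⟩
  · rintro ⟨a, b, c, d, hab, hbc, -⟩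
    have := a.2; have := b.2; have := c.2
    have h1 : a.val < b.val := hab
    have h2 : b.val < c.val := hbc
    omega
  · rintro ⟨a, b, c, hab, hbc, -⟩
    have := a.2; have := b.2; have := c.2
    have h1 : a.val < b.val := hab
    have h2 : b.val < c.val := hbc
    omega

lemma count_zero : count3412x132 0 = 1 := by
  haveI : Subsingleton (Perm (Fin 0)) :=
    ⟨fun a b => Equiv.ext fun i => i.elim0⟩
  haveI : Nonempty {π : Perm (Fin 0) // Function.Involutive ⇑π ∧ Avoids3412 π ∧ Avoids132 π} := ⟨⟨1, gd_one 0 (by norm_num)⟩⟩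
  exact Nat.card_unique

lemma count_one : count3412x132 1 = 1 := by
  haveI : Subsingleton (Perm (Fin 1)) :=
    ⟨fun a b => Equiv.ext fun i => Subsingleton.elim _ _⟩
  haveI : Nonempty {π : Perm (Fin 1) // Function.Involutive ⇑π ∧ Avoids3412 π ∧ Avoids132 π} := ⟨⟨1, gd_one 1 le_rfl⟩⟩
  exact Nat.card_unique

lemma count_fib : ∀ n : ℕ, count3412x132 n = Nat.fib (n+1)
  | 0 => by rw [count_zero]; rfl
  | 1 => by rw [count_one]; rfl
  | (n+2) => by
    rw [count_rec, count_fib (n+1), count_fib n]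
    have h2 : Nat.fib (n+1+2) = Nat.fib (n+1) + Nat.fib (n+1+1) := Nat.fib_add_two
    have e : n+2+1 = n+1+2 := by omega
    rw [e, h2]
    exact Nat.add_comm _ _


/-- The involutions avoiding 3412 and 132 are counted by the Fibonacci numbers
`F_{n+1}` (with `F₁ = F₂ = 1`), with generating function `x(1+x)/(1−x−x²)`. -/
theorem stmt18 :
    (∀ n : ℕ, 1 ≤ n → count3412x132 n = Nat.fib (n + 1)) ∧
    (1 - PowerSeries.X - PowerSeries.X ^ 2) *
        (PowerSeries.mk fun n => if n = 0 then (0 : ℚ) else (count3412x132 n : ℚ))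
      = PowerSeries.X * (1 + PowerSeries.X) := by
  constructor
  · intro n _
    exact count_fib n
  · set f : PowerSeries ℚ :=
      PowerSeries.mk fun n => if n = 0 then (0 : ℚ) else (count3412x132 n : ℚ) with hfdef
    have hf : ∀ k : ℕ, (PowerSeries.coeff k) f = if k = 0 then 0 else (Nat.fib (k+1) : ℚ) := by
      intro k
      rw [hfdef, PowerSeries.coeff_mk]
      split_ifs with h
      · rfl
      · rw [count_fib k]
    have expand : ((1 : PowerSeries ℚ) - PowerSeries.X - PowerSeries.X ^ 2) * f
        = f - PowerSeries.X * f - PowerSeries.X * (PowerSeries.X * f) := by ring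
    have expand2 : (PowerSeries.X : PowerSeries ℚ) * (1 + PowerSeries.X)
        = PowerSeries.X + PowerSeries.X * PowerSeries.X := by ring
    rw [expand, expand2]
    ext n
    rw [map_sub, map_sub, map_add]
    rcases n with _ | _ | _ | k
    · rw [PowerSeries.coeff_zero_X_mul, PowerSeries.coeff_zero_X_mul,
        PowerSeries.coeff_zero_X_mul, hf]
      simp
    · rw [PowerSeries.coeff_succ_X_mul, PowerSeries.coeff_succ_X_mul,
        PowerSeries.coeff_succ_X_mul, PowerSeries.coeff_zero_X_mul, hf, hf,
        PowerSeries.coeff_X]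
      norm_num
    · rw [PowerSeries.coeff_succ_X_mul, PowerSeries.coeff_succ_X_mul,
        PowerSeries.coeff_succ_X_mul, PowerSeries.coeff_succ_X_mul, hf, hf, hf,
        PowerSeries.coeff_X, PowerSeries.coeff_X]
      norm_num
    · rw [PowerSeries.coeff_succ_X_mul, PowerSeries.coeff_succ_X_mul,
        PowerSeries.coeff_succ_X_mul, PowerSeries.coeff_succ_X_mul, hf, hf, hf,
        PowerSeries.coeff_X, PowerSeries.coeff_X]
      have h2 := Nat.fib_add_two (n := k + 2)
      norm_num
      push_cast
      rw [show k + 1 + 1 + 1 + 1 = k + 2 + 2 by omega] at *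
      rw [show k + 1 + 1 + 1 = k + 2 + 1 by omega] at *
      rw [h2]
      push_cast
      ring
end

section
/- The number of 3412-avoiding involutions of length n equals the number of 4321-avoiding involutions of length n, and both equal the n-th Motzkin number; moreover, the connected (irreducible) involutions in each class of length n+2 are also equinumerous, counted by the Motzkin number of index n (plus the correction for length 2), i.e., the generating function for irreducible involutions in either class is (f(x)+1)x² where f(x) = (1−x−√(1−2x−3x²))/(2x²) − 1. -/
open Equiv Finset

/-- Number of Motzkin paths of length `n` (the Motzkin number `M_n`). -/
noncomputable def motzkinNum (n : ℕ) : ℕ :=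
  Nat.card {l : List ℤ // IsMotzkinPath l ∧ l.length = n}

noncomputable def count3412 (n : ℕ) : ℕ :=
  Nat.card {π : Equiv.Perm (Fin n) // Function.Involutive ⇑π ∧ Avoids3412 π}

noncomputable def count4321 (n : ℕ) : ℕ :=
  Nat.card {π : Equiv.Perm (Fin n) // Function.Involutive ⇑π ∧ Avoids4321 π}

noncomputable def connCount3412 (n : ℕ) : ℕ :=
  Nat.card {π : Equiv.Perm (Fin n) // Function.Involutive ⇑π ∧ Avoids3412 π ∧
    IsConnectedPerm π}

noncomputable def connCount4321 (n : ℕ) : ℕ :=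
  Nat.card {π : Equiv.Perm (Fin n) // Function.Involutive ⇑π ∧ Avoids4321 π ∧
    IsConnectedPerm π}

namespace Stmt19Aux

open scoped Classical

noncomputable section

/-! ### Heights and steps -/

def hsum (l : List ℤ) (k : ℕ) : ℤ := (l.take k).sum

def toSteps {n : ℕ} (π : Equiv.Perm (Fin n)) : List ℤ := List.ofFn (fun i => invStep π i)

@[simp] lemma length_toSteps {n : ℕ} (π : Equiv.Perm (Fin n)) : (toSteps π).length = n := by
  simp [toSteps]

lemma hsum_toSteps {n : ℕ} (π : Equiv.Perm (Fin n)) (k : ℕ) :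
    hsum (toSteps π) k = heightUpTo π k := by
  rw [hsum, toSteps, List.sum_take_ofFn, heightUpTo]

lemma heightUpTo_zero {n : ℕ} (π : Equiv.Perm (Fin n)) : heightUpTo π 0 = 0 := by
  simp [heightUpTo]

lemma heightUpTo_succ {n : ℕ} (π : Equiv.Perm (Fin n)) (k : ℕ) (hk : k < n) :
    heightUpTo π (k + 1) = heightUpTo π k + invStep π ⟨k, hk⟩ := by
  rw [heightUpTo, heightUpTo]
  have h : Finset.univ.filter (fun i : Fin n => i.val < k + 1) =
      insert ⟨k, hk⟩ (Finset.univ.filter (fun i : Fin n => i.val < k)) := by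
    ext x
    simp only [Finset.mem_filter, Finset.mem_univ, true_and, Finset.mem_insert, Fin.ext_iff]
    omega
  rw [h, Finset.sum_insert (by simp)]
  ring

lemma invStep_spec {n : ℕ} (π : Equiv.Perm (Fin n)) (i : Fin n) :
    (π i = i ∧ invStep π i = 0) ∨ (i < π i ∧ invStep π i = 1) ∨ (π i < i ∧ invStep π i = -1) := by
  unfold invStep
  rcases lt_trichotomy i (π i) with h | h | h
  · exact Or.inr (Or.inl ⟨h, by rw [if_neg (fun he => absurd (he ▸ h) (lt_irrefl _)), if_pos h]⟩)
  · exact Or.inl ⟨h.symm, by rw [if_pos h.symm]⟩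
  · exact Or.inr (Or.inr ⟨h, by rw [if_neg (ne_of_lt h), if_neg (lt_asymm h)]⟩)

lemma invStep_cases {n : ℕ} (π : Equiv.Perm (Fin n)) (i : Fin n) :
    invStep π i = 1 ∨ invStep π i = 0 ∨ invStep π i = -1 := by
  rcases invStep_spec π i with ⟨_, e⟩ | ⟨_, e⟩ | ⟨_, e⟩ <;> simp [e]

lemma invStep_eq_one_iff {n : ℕ} (π : Equiv.Perm (Fin n)) (i : Fin n) :
    invStep π i = 1 ↔ i < π i := by
  rcases invStep_spec π i with ⟨h, e⟩ | ⟨h, e⟩ | ⟨h, e⟩ <;> rw [e]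
  · constructor
    · intro he; norm_num at he
    · intro hlt; rw [h] at hlt; exact absurd hlt (lt_irrefl _)
  · simp [h]
  · constructor
    · intro he; norm_num at he
    · intro hlt; exact absurd hlt (lt_asymm h)

lemma invStep_eq_zero_iff {n : ℕ} (π : Equiv.Perm (Fin n)) (i : Fin n) :
    invStep π i = 0 ↔ π i = i := by
  rcases invStep_spec π i with ⟨h, e⟩ | ⟨h, e⟩ | ⟨h, e⟩ <;> rw [e]
  · simp [h]
  · constructor
    · intro he; norm_num at he
    · intro he; rw [he] at h; exact absurd h (lt_irrefl _)
  · constructor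
    · intro he; norm_num at he
    · intro he; rw [he] at h; exact absurd h (lt_irrefl _)

lemma invStep_eq_negone_iff {n : ℕ} (π : Equiv.Perm (Fin n)) (i : Fin n) :
    invStep π i = -1 ↔ π i < i := by
  rcases invStep_spec π i with ⟨h, e⟩ | ⟨h, e⟩ | ⟨h, e⟩ <;> rw [e]
  · constructor
    · intro he; norm_num at he
    · intro hlt; rw [h] at hlt; exact absurd hlt (lt_irrefl _)
  · constructor
    · intro he; norm_num at he
    · intro hlt; exact absurd hlt (lt_asymm h)
  · simp [h]

/-- heights count the open arcs. -/
lemma height_eq_card {n : ℕ} {π : Equiv.Perm (Fin n)} (hπ : Function.Involutive ⇑π) (k : ℕ) :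
    heightUpTo π k =
      ((Finset.univ.filter (fun x : Fin n => x.val < k ∧ x < π x ∧ k ≤ (π x).val)).card : ℤ) := by
  classical
  have hstep : ∀ i : Fin n, invStep π i =
      (if i < π i then (1:ℤ) else 0) - (if π i < i then (1:ℤ) else 0) := by
    intro i
    rcases invStep_spec π i with ⟨h, e⟩ | ⟨h, e⟩ | ⟨h, e⟩ <;> rw [e]
    · rw [h]; simp
    · rw [if_pos h, if_neg (lt_asymm h)]; ring
    · rw [if_neg (lt_asymm h), if_pos h]; ring
  rw [heightUpTo]
  rw [Finset.sum_congr rfl (fun i _ => hstep i), Finset.sum_sub_distrib]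
  rw [Finset.sum_boole, Finset.sum_boole, Finset.filter_filter, Finset.filter_filter]
  -- bijection between downs < k and ups < k with close < k
  have hbij : (Finset.univ.filter (fun x : Fin n => x.val < k ∧ π x < x)).card =
      (Finset.univ.filter (fun x : Fin n => x.val < k ∧ x < π x ∧ (π x).val < k)).card := by
    apply Finset.card_bij (fun x _ => π x)
    · intro a ha
      simp only [Finset.mem_filter, Finset.mem_univ, true_and] at ha ⊢
      rw [hπ a]
      have h2 := Fin.lt_def.mp ha.2
      exact ⟨by omega, ha.2, ha.1⟩
    · intro a ha b hb hab
      exact π.injective hab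
    · intro b hb
      simp only [Finset.mem_filter, Finset.mem_univ, true_and] at hb
      refine ⟨π b, ?_, hπ b⟩
      simp only [Finset.mem_filter, Finset.mem_univ, true_and]
      rw [hπ b]
      exact ⟨hb.2.2, hb.2.1⟩
  rw [hbij]
  have hsplit : (Finset.univ.filter (fun x : Fin n => x.val < k ∧ x < π x)).card =
      (Finset.univ.filter (fun x : Fin n => x.val < k ∧ x < π x ∧ (π x).val < k)).card +
      (Finset.univ.filter (fun x : Fin n => x.val < k ∧ x < π x ∧ k ≤ (π x).val)).card := by
    rw [← Finset.card_union_of_disjoint]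
    · congr 1
      ext x
      simp only [Finset.mem_union, Finset.mem_filter, Finset.mem_univ, true_and]
      constructor
      · rintro ⟨h1, h2⟩
        rcases lt_or_ge (π x).val k with h | h
        · exact Or.inl ⟨h1, h2, h⟩
        · exact Or.inr ⟨h1, h2, h⟩
      · rintro (⟨h1, h2, _⟩ | ⟨h1, h2, _⟩) <;> exact ⟨h1, h2⟩
    · rw [Finset.disjoint_left]
      intro x hx hy
      simp only [Finset.mem_filter] at hx hy
      omega
  rw [hsplit]
  push_cast
  ring

end

end Stmt19Aux

namespace Stmt19Aux

noncomputable section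

variable {n : ℕ}

lemma heightUpTo_nonneg {π : Equiv.Perm (Fin n)} (hπ : Function.Involutive ⇑π) (k : ℕ) :
    0 ≤ heightUpTo π k := by
  rw [height_eq_card hπ]
  positivity

lemma heightUpTo_length {π : Equiv.Perm (Fin n)} (hπ : Function.Involutive ⇑π) :
    heightUpTo π n = 0 := by
  rw [height_eq_card hπ]
  have : (Finset.univ.filter (fun x : Fin n => x.val < n ∧ x < π x ∧ n ≤ (π x).val)) = ∅ := by
    ext x
    simp only [Finset.mem_filter, Finset.mem_univ, true_and, Finset.notMem_empty, iff_false]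
    intro ⟨_, _, h3⟩
    exact absurd (π x).isLt (not_lt.mpr h3)
  rw [this]
  simp

lemma isMotzkin_toSteps {π : Equiv.Perm (Fin n)} (hπ : Function.Involutive ⇑π) :
    IsMotzkinPath (toSteps π) := by
  refine ⟨?_, ?_, ?_⟩
  · intro s hs
    rw [toSteps, List.mem_ofFn] at hs
    obtain ⟨i, rfl⟩ := hs
    exact invStep_cases π i
  · have := hsum_toSteps π n
    rw [hsum, List.take_of_length_le (by simp)] at this
    rw [this]
    exact heightUpTo_length hπ
  · intro p hp
    rw [List.prefix_iff_eq_take] at hp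
    rw [hp]
    have := hsum_toSteps π p.length
    rw [hsum] at this
    rw [this]
    exact heightUpTo_nonneg hπ _

/-! ### Pattern avoidance characterizations for involutions -/

lemma avoids3412_iff {π : Equiv.Perm (Fin n)} (hπ : Function.Involutive ⇑π) :
    Avoids3412 π ↔ ¬ ∃ a b : Fin n, a < b ∧ b < π a ∧ π a < π b := by
  unfold Avoids3412
  constructor
  · intro h hc
    obtain ⟨a, b, hab, hba, hpab⟩ := hc
    refine h ⟨a, b, π a, π b, hab, hba, hpab, ?_, ?_, hpab⟩
    · rw [hπ a, hπ b]; exact hab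
    · rw [hπ b]; exact hba
  · intro h hc
    obtain ⟨a, b, c, d, hab, hbc, hcd, h1, h2, h3⟩ := hc
    -- h1 : π c < π d, h2 : π d < π a, h3 : π a < π b
    rcases lt_trichotomy (π d) c with hdc | hdc | hdc
    · -- crossing arcs (π c, c) and (π d, d)
      refine h ⟨π c, π d, h1, ?_, ?_⟩
      · rw [hπ c]; exact hdc
      · rw [hπ c, hπ d]; exact hcd
    · -- π d = c impossible
      have hc2 : π c = d := by rw [← hdc, hπ d]
      rw [hc2, hdc] at h1
      exact absurd (hcd.trans h1) (lt_irrefl _)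
    · -- crossing arcs (a, π a) and (b, π b)
      exact h ⟨a, b, hab, hbc.trans (hdc.trans h2), h3⟩
  
lemma avoids4321_iff {π : Equiv.Perm (Fin n)} (hπ : Function.Involutive ⇑π) :
    Avoids4321 π ↔ ¬ ∃ a b : Fin n, a < b ∧ b < π b ∧ π b < π a := by
  unfold Avoids4321
  constructor
  · intro h hc
    obtain ⟨a, b, hab, hbb, hba⟩ := hc
    refine h ⟨a, b, π b, π a, hab, hbb, hba, ?_, ?_, hba⟩
    · rw [hπ a, hπ b]; exact hab
    · rw [hπ b]; exact hbb
  · intro h hc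
    obtain ⟨a, b, c, d, hab, hbc, hcd, h1, h2, h3⟩ := hc
    -- h1 : π d < π c, h2 : π c < π b, h3 : π b < π a
    rcases lt_or_ge b (π b) with hb | hb
    · exact h ⟨a, b, hab, hb, h3⟩
    · -- arcs (π d, d) nests (π c, c)
      have hcb : π c < c := lt_of_lt_of_le (h2.trans_le hb) hbc.le
      refine h ⟨π d, π c, h1, ?_, ?_⟩
      · rw [hπ c]; exact hcb
      · rw [hπ c, hπ d]; exact hcd

end

end Stmt19Aux

namespace Stmt19Aux

noncomputable section

/-! ### Abstract list lemmas -/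

lemma hsum_zero (l : List ℤ) : hsum l 0 = 0 := rfl

lemma hsum_succ (l : List ℤ) (k : ℕ) (hk : k < l.length) :
    hsum l (k + 1) = hsum l k + l[k]'hk := by
  rw [hsum, hsum, List.sum_take_succ l k hk]

lemma hsum_of_le (l : List ℤ) {k : ℕ} (hk : l.length ≤ k) : hsum l k = l.sum := by
  rw [hsum, List.take_of_length_le hk]

lemma hsum_nonneg {l : List ℤ} (hl : IsMotzkinPath l) (k : ℕ) : 0 ≤ hsum l k :=
  hl.2.2 _ (List.take_prefix k l)

lemma hsum_length {l : List ℤ} (hl : IsMotzkinPath l) {k : ℕ} (hk : l.length ≤ k) :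
    hsum l k = 0 := by
  rw [hsum_of_le l hk]; exact hl.2.1

def upAt (l : List ℤ) (i : ℕ) : Prop := i < l.length ∧ hsum l (i + 1) = hsum l i + 1
def downAt (l : List ℤ) (i : ℕ) : Prop := i < l.length ∧ hsum l (i + 1) = hsum l i - 1
def flatAt (l : List ℤ) (i : ℕ) : Prop := i < l.length ∧ hsum l (i + 1) = hsum l i

lemma step_trichotomy {l : List ℤ} (hl : IsMotzkinPath l) {k : ℕ} (hk : k < l.length) :
    upAt l k ∨ flatAt l k ∨ downAt l k := by
  have hmem : l[k]'hk ∈ l := List.getElem_mem hk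
  have hs := hsum_succ l k hk
  rcases hl.1 _ hmem with h | h | h
  · exact Or.inl ⟨hk, by rw [hs, h]⟩
  · exact Or.inr (Or.inl ⟨hk, by rw [hs, h, add_zero]⟩)
  · exact Or.inr (Or.inr ⟨hk, by rw [hs, h]; ring⟩)

/-! ### Non-crossing matching -/

def Matched (l : List ℤ) (i j : ℕ) : Prop :=
  i < j ∧ j < l.length ∧ hsum l (j + 1) = hsum l i ∧
    ∀ k, i < k → k ≤ j → hsum l i < hsum l k

lemma Matched.upAt {l : List ℤ} {i j : ℕ} (hl : IsMotzkinPath l) (h : Matched l i j) :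
    upAt l i := by
  obtain ⟨hij, hjl, heq, hk⟩ := h
  have hil : i < l.length := hij.trans hjl
  have h1 := hk (i + 1) (Nat.lt_succ_self i) hij
  rcases step_trichotomy hl hil with hu | hf | hd
  · exact hu
  · rw [hf.2] at h1; exact absurd h1 (lt_irrefl _)
  · rw [hd.2] at h1; omega

lemma Matched.downAt {l : List ℤ} {i j : ℕ} (hl : IsMotzkinPath l) (h : Matched l i j) :
    downAt l j := by
  obtain ⟨hij, hjl, heq, hk⟩ := h
  have h1 := hk j hij (le_refl j)
  rcases step_trichotomy hl hjl with hu | hf | hd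
  · rw [hu.2] at heq; omega
  · rw [hf.2] at heq; omega
  · exact hd

lemma Matched.unique_right {l : List ℤ} {i j j' : ℕ} (h : Matched l i j) (h' : Matched l i j') :
    j = j' := by
  by_contra hne
  rcases lt_or_gt_of_ne hne with hlt | hlt
  · have hi := h.1
    have := h'.2.2.2 (j + 1) (by omega) (by omega)
    rw [h.2.2.1] at this
    exact absurd this (lt_irrefl _)
  · have hi := h'.1
    have := h.2.2.2 (j' + 1) (by omega) (by omega)
    rw [h'.2.2.1] at this
    exact absurd this (lt_irrefl _)

lemma Matched.unique_left {l : List ℤ} {i i' j : ℕ} (h : Matched l i j) (h' : Matched l i' j) :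
    i = i' := by
  by_contra hne
  rcases lt_or_gt_of_ne hne with hlt | hlt
  · have h1 := h.2.2.2 i' hlt h'.1.le
    rw [← h.2.2.1, h'.2.2.1] at h1
    exact absurd h1 (lt_irrefl _)
  · have h1 := h'.2.2.2 i hlt h.1.le
    rw [← h'.2.2.1, h.2.2.1] at h1
    exact absurd h1 (lt_irrefl _)

end

end Stmt19Aux

namespace Stmt19Aux

open scoped Classical

noncomputable section

lemma exists_matched_of_up {l : List ℤ} (hl : IsMotzkinPath l) {i : ℕ} (h : upAt l i) :
    ∃ j, Matched l i j := by
  obtain ⟨hil, hstep⟩ := h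
  have hnn := hsum_nonneg hl
  have hi1 : i + 1 < l.length := by
    rcases Nat.lt_or_ge (i + 1) l.length with h | h
    · exact h
    · exfalso
      have h0 := hsum_length hl h
      have := hnn i
      omega
  have hPw : i < l.length - 1 ∧ hsum l ((l.length - 1) + 1) ≤ hsum l i := by
    refine ⟨by omega, ?_⟩
    have he : l.length - 1 + 1 = l.length := by omega
    rw [he, hsum_length hl (le_refl _)]
    exact hnn i
  have hP : ∃ j, i < j ∧ hsum l (j + 1) ≤ hsum l i := ⟨l.length - 1, hPw⟩
  set j := Nat.find hP with hj
  obtain ⟨hij, hle⟩ := Nat.find_spec hP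
  rw [← hj] at hij hle
  have hjmin : ∀ k, k < j → ¬ (i < k ∧ hsum l (k + 1) ≤ hsum l i) := fun k hk => Nat.find_min hP hk
  have hfind : j ≤ l.length - 1 := Nat.find_min' hP hPw
  have hjl : j < l.length := by omega
  have hint : ∀ k, i < k → k ≤ j → hsum l i < hsum l k := by
    intro k hik hkj
    rcases Nat.eq_or_lt_of_le (Nat.succ_le_of_lt hik) with he | hlt2
    · have hke : k = i + 1 := by omega
      rw [hke]; omega
    · have hk1 : i < k - 1 := by omega
      have h2 := hjmin (k - 1) (by omega)
      push_neg at h2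
      have h3 := h2 hk1
      have he : k - 1 + 1 = k := by omega
      rw [he] at h3
      omega
  refine ⟨j, hij, hjl, ?_, hint⟩
  have hj1 : hsum l i < hsum l j := hint j hij (le_refl j)
  rcases step_trichotomy hl hjl with hu | hf | hd
  · have := hu.2; omega
  · have := hf.2; omega
  · have := hd.2; omega

lemma exists_matched_of_down {l : List ℤ} (hl : IsMotzkinPath l) {j : ℕ} (h : downAt l j) :
    ∃ i, Matched l i j := by
  obtain ⟨hjl, hstep⟩ := h
  have hnn := hsum_nonneg hl
  have hQ0 : hsum l 0 ≤ hsum l (j + 1) := by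
    rw [hsum_zero]; exact hnn _
  set P : ℕ → Prop := fun i => hsum l i ≤ hsum l (j + 1) with hPdef
  set i := Nat.findGreatest P j with hi
  have hQi : hsum l i ≤ hsum l (j + 1) := by
    have h := Nat.findGreatest_spec (P := P) (Nat.zero_le j) (by rw [hPdef]; exact hQ0)
    rw [← hi, hPdef] at h
    exact h
  have hij : i ≤ j := by
    rw [hi]
    exact Nat.findGreatest_le j
  have hmax : ∀ k, i < k → k ≤ j → ¬ (hsum l k ≤ hsum l (j + 1)) := by
    intro k hk1 hk2 hc
    have h := Nat.findGreatest_is_greatest (P := P) (by rw [← hi]; exact hk1) hk2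
    rw [hPdef] at h
    exact h hc
  have hine : i ≠ j := by
    intro he
    rw [he] at hQi
    omega
  have hilt : i < j := lt_of_le_of_ne hij hine
  have hint : ∀ k, i < k → k ≤ j → hsum l (j + 1) < hsum l k := by
    intro k h1 h2
    have := hmax k h1 h2
    omega
  have heq : hsum l i = hsum l (j + 1) := by
    have h1 : hsum l (j + 1) < hsum l (i + 1) := hint (i + 1) (Nat.lt_succ_self i) hilt
    have hi_lt : i < l.length := lt_of_lt_of_le hilt hjl.le
    rcases step_trichotomy hl hi_lt with hu | hf | hd
    · have := hu.2; omega
    · have := hf.2; omega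
    · have := hd.2; omega
  refine ⟨i, hilt, hjl, heq.symm, ?_⟩
  intro k h1 h2
  rw [heq]
  exact hint k h1 h2

end

end Stmt19Aux

namespace Stmt19Aux

open scoped Classical

noncomputable section

def ncFun (l : List ℤ) (i : ℕ) : ℕ :=
  if h : ∃ j, Matched l i j then h.choose
  else if h : ∃ j, Matched l j i then h.choose
  else i

lemma ncFun_up {l : List ℤ} (hl : IsMotzkinPath l) {i : ℕ} (h : upAt l i) :
    Matched l i (ncFun l i) := by
  have he : ∃ j, Matched l i j := exists_matched_of_up hl h
  rw [ncFun, dif_pos he]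
  exact he.choose_spec

lemma ncFun_down {l : List ℤ} (hl : IsMotzkinPath l) {i : ℕ} (h : downAt l i) :
    Matched l (ncFun l i) i := by
  have hne : ¬ ∃ j, Matched l i j := by
    rintro ⟨j, hj⟩
    have := (hj.upAt hl).2
    have := h.2
    omega
  have he : ∃ j, Matched l j i := exists_matched_of_down hl h
  rw [ncFun, dif_neg hne, dif_pos he]
  exact he.choose_spec

lemma ncFun_flat {l : List ℤ} (hl : IsMotzkinPath l) {i : ℕ} (h : flatAt l i) :
    ncFun l i = i := by
  have hne : ¬ ∃ j, Matched l i j := by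
    rintro ⟨j, hj⟩
    have := (hj.upAt hl).2
    have := h.2
    omega
  have hne' : ¬ ∃ j, Matched l j i := by
    rintro ⟨j, hj⟩
    have := (hj.downAt hl).2
    have := h.2
    omega
  rw [ncFun, dif_neg hne, dif_neg hne']

lemma ncFun_lt {l : List ℤ} (hl : IsMotzkinPath l) {i : ℕ} (hi : i < l.length) :
    ncFun l i < l.length := by
  rcases step_trichotomy hl hi with hu | hf | hd
  · exact (ncFun_up hl hu).2.1
  · rw [ncFun_flat hl hf]; exact hi
  · exact ((ncFun_down hl hd).1).trans hi

lemma ncFun_invol {l : List ℤ} (hl : IsMotzkinPath l) {i : ℕ} (hi : i < l.length) :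
    ncFun l (ncFun l i) = i := by
  rcases step_trichotomy hl hi with hu | hf | hd
  · have hm := ncFun_up hl hu
    have hd2 := hm.downAt hl
    have hm2 := ncFun_down hl hd2
    exact hm2.unique_left hm
  · rw [ncFun_flat hl hf, ncFun_flat hl hf]
  · have hm := ncFun_down hl hd
    have hu2 := hm.upAt hl
    have hm2 := ncFun_up hl hu2
    exact hm2.unique_right hm

def ncPerm (n : ℕ) (l : List ℤ) (hl : IsMotzkinPath l) (hlen : l.length = n) :
    Equiv.Perm (Fin n) :=
  Function.Involutive.toPerm
    (fun i => ⟨ncFun l i.val, by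
      have h := ncFun_lt hl (show (i : ℕ) < l.length by rw [hlen]; exact i.isLt)
      rwa [hlen] at h⟩)
    (fun i => Fin.ext
      (ncFun_invol hl (show (i : ℕ) < l.length by rw [hlen]; exact i.isLt)))

lemma ncPerm_apply {n : ℕ} (l : List ℤ) (hl : IsMotzkinPath l) (hlen : l.length = n)
    (i : Fin n) : ((ncPerm n l hl hlen) i : ℕ) = ncFun l i.val := rfl

lemma ncPerm_involutive {n : ℕ} (l : List ℤ) (hl : IsMotzkinPath l) (hlen : l.length = n) :
    Function.Involutive ⇑(ncPerm n l hl hlen) :=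
  fun i => Fin.ext
    (ncFun_invol hl (show (i : ℕ) < l.length by rw [hlen]; exact i.isLt))

lemma toSteps_ncPerm {n : ℕ} (l : List ℤ) (hl : IsMotzkinPath l) (hlen : l.length = n) :
    toSteps (ncPerm n l hl hlen) = l := by
  apply List.ext_getElem
  · simp [toSteps, hlen]
  intro k h1 h2
  unfold toSteps at h1 ⊢
  rw [List.getElem_ofFn]
  set i : Fin n := ⟨k, by simpa using h1⟩ with hidef
  have hkl : k < l.length := h2
  rcases step_trichotomy hl hkl with hu | hf | hd
  · have hm := ncFun_up hl hu
    have : i < ncPerm n l hl hlen i := by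
      rw [Fin.lt_def, ncPerm_apply]
      exact hm.1
    rw [(invStep_eq_one_iff _ _).mpr this]
    have := hu.2
    have := hsum_succ l k hkl
    omega
  · have hnc := ncFun_flat hl hf
    have : ncPerm n l hl hlen i = i := Fin.ext (by rw [ncPerm_apply]; exact hnc)
    rw [(invStep_eq_zero_iff _ _).mpr this]
    have := hf.2
    have := hsum_succ l k hkl
    omega
  · have hm := ncFun_down hl hd
    have : ncPerm n l hl hlen i < i := by
      rw [Fin.lt_def, ncPerm_apply]
      exact hm.1
    rw [(invStep_eq_negone_iff _ _).mpr this]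
    have := hd.2
    have := hsum_succ l k hkl
    omega

lemma ncPerm_arc {n : ℕ} {l : List ℤ} (hl : IsMotzkinPath l) (hlen : l.length = n)
    {i : Fin n} (h : i < ncPerm n l hl hlen i) :
    Matched l i.val ((ncPerm n l hl hlen i) : ℕ) := by
  have hkl : (i : ℕ) < l.length := hlen ▸ i.isLt
  rcases step_trichotomy hl hkl with hu | hf | hd
  · have hm := ncFun_up hl hu
    rwa [ncPerm_apply]
  · exfalso
    have := ncFun_flat hl hf
    rw [Fin.lt_def, ncPerm_apply, this] at h
    exact absurd h (lt_irrefl _)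
  · exfalso
    have hm := ncFun_down hl hd
    rw [Fin.lt_def, ncPerm_apply] at h
    have := hm.1
    omega

lemma ncPerm_noCross {n : ℕ} (l : List ℤ) (hl : IsMotzkinPath l) (hlen : l.length = n) :
    ¬ ∃ a b : Fin n, a < b ∧ b < (ncPerm n l hl hlen) a ∧
      (ncPerm n l hl hlen) a < (ncPerm n l hl hlen) b := by
  rintro ⟨a, b, hab, hba, hpp⟩
  set π := ncPerm n l hl hlen
  have hma : Matched l a.val ((π a : ℕ)) := ncPerm_arc hl hlen (hab.trans hba)
  have hmb : Matched l b.val ((π b : ℕ)) := ncPerm_arc hl hlen (hba.trans hpp)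
  -- crossing: a < b < π a < π b
  have h1 : hsum l b.val > hsum l a.val := hma.2.2.2 b.val hab hba.le
  have h2 : hsum l ((π a : ℕ) + 1) = hsum l a.val := hma.2.2.1
  have h3 : hsum l ((π a : ℕ) + 1) > hsum l b.val :=
    hmb.2.2.2 ((π a : ℕ) + 1) (by have := Fin.lt_def.mp hba; omega)
      (by have := Fin.lt_def.mp hpp; omega)
  omega

end

end Stmt19Aux

namespace Stmt19Aux

noncomputable section

variable {n : ℕ}

lemma matched_arc {π : Equiv.Perm (Fin n)} (hπ : Function.Involutive ⇑π)
    (hnc : ¬ ∃ a b : Fin n, a < b ∧ b < π a ∧ π a < π b)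
    {i : Fin n} (h : i < π i) :
    Matched (toSteps π) i.val ((π i : ℕ)) := by
  set a : ℕ := (π i : ℕ) with ha
  have hia : i.val < a := Fin.lt_def.mp h
  refine ⟨hia, by rw [length_toSteps]; exact (π i).isLt, ?_, ?_⟩
  · -- hsum (a+1) = hsum i
    rw [hsum_toSteps, hsum_toSteps, height_eq_card hπ, height_eq_card hπ]
    congr 2
    ext x
    simp only [Finset.mem_filter, Finset.mem_univ, true_and]
    constructor
    · rintro ⟨h1, h2, h3⟩
      refine ⟨?_, h2, by omega⟩
      by_contra hxi
      push_neg at hxi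
      have hxne : x ≠ i := by
        intro he
        rw [he] at h3
        omega
      have hxi' : i < x := Fin.lt_def.mpr (lt_of_le_of_ne hxi (fun he => hxne (Fin.ext he.symm)))
      have hxpi : x ≠ π i := by
        intro he
        have : π x = i := by rw [he, hπ i]
        rw [this] at h3
        have : (i : ℕ) < a := hia
        omega
      have hxa : x.val < a := by
        have : x.val ≠ a := fun he => hxpi (Fin.ext he)
        omega
      exact hnc ⟨i, x, hxi', Fin.lt_def.mpr hxa, Fin.lt_def.mpr (by omega)⟩
    · rintro ⟨h1, h2, h3⟩
      refine ⟨by omega, h2, ?_⟩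
      by_contra hc
      push_neg at hc
      have hxpi : π x ≠ i := by
        intro he
        have : x = π i := by rw [← he, hπ x]
        rw [this] at h1
        omega
      have h4 : i.val < (π x).val := lt_of_le_of_ne h3 (fun he => hxpi (Fin.ext he.symm))
      have hpxa : (π x).val ≠ a := by
        intro he
        have : π x = π i := Fin.ext he
        have := π.injective this
        rw [this] at h1
        exact absurd h1 (lt_irrefl _)
      have : (π x).val < a := by omega
      exact hnc ⟨x, i, Fin.lt_def.mpr h1, Fin.lt_def.mpr h4, Fin.lt_def.mpr this⟩
  · -- interior strict
    intro k hik hka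
    rw [hsum_toSteps, hsum_toSteps, height_eq_card hπ, height_eq_card hπ]
    have hss : (Finset.univ.filter (fun x : Fin n => x.val < i.val ∧ x < π x ∧ i.val ≤ (π x).val)) ⊂
        (Finset.univ.filter (fun x : Fin n => x.val < k ∧ x < π x ∧ k ≤ (π x).val)) := by
      constructor
      · intro x hx
        simp only [Finset.mem_filter, Finset.mem_univ, true_and] at hx ⊢
        obtain ⟨h1, h2, h3⟩ := hx
        refine ⟨by omega, h2, ?_⟩
        by_contra hc
        push_neg at hc
        have hxpi : π x ≠ i := by
          intro he
          have : x = π i := by rw [← he, hπ x]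
          rw [this] at h1
          omega
        have h4 : i.val < (π x).val := lt_of_le_of_ne h3 (fun he => hxpi (Fin.ext he.symm))
        have hpxa : (π x).val ≠ a := by
          intro he
          have := π.injective (Fin.ext he : π x = π i)
          rw [this] at h1
          exact absurd h1 (lt_irrefl _)
        have h5 : (π x).val < a := by omega
        exact hnc ⟨x, i, Fin.lt_def.mpr (by omega), Fin.lt_def.mpr h4, Fin.lt_def.mpr h5⟩
      · intro hsub
        have hi : i ∈ Finset.univ.filter (fun x : Fin n => x.val < k ∧ x < π x ∧ k ≤ (π x).val) := by
          simp only [Finset.mem_filter, Finset.mem_univ, true_and]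
          exact ⟨hik, h, hka⟩
        have := hsub hi
        simp only [Finset.mem_filter, Finset.mem_univ, true_and] at this
        omega
    exact_mod_cast Finset.card_lt_card hss

lemma invStep_eq_of_toSteps_eq {π σ : Equiv.Perm (Fin n)}
    (h : toSteps π = toSteps σ) : ∀ i, invStep π i = invStep σ i := by
  have := List.ofFn_injective h
  intro i
  exact congrFun this i

lemma eq_of_steps_eq_nc {π σ : Equiv.Perm (Fin n)}
    (hπ : Function.Involutive ⇑π) (hσ : Function.Involutive ⇑σ)
    (hπc : ¬ ∃ a b : Fin n, a < b ∧ b < π a ∧ π a < π b)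
    (hσc : ¬ ∃ a b : Fin n, a < b ∧ b < σ a ∧ σ a < σ b)
    (h : toSteps π = toSteps σ) : π = σ := by
  have hup : ∀ i : Fin n, i < π i → π i = σ i := by
    intro i hi
    have h1 : Matched (toSteps π) i.val ((π i : ℕ)) := matched_arc hπ hπc hi
    have hup2 : i < σ i := by
      have e1 : invStep π i = 1 := (invStep_eq_one_iff π i).mpr hi
      have e2 : invStep σ i = invStep π i := (invStep_eq_of_toSteps_eq h i).symm
      rw [e1] at e2
      exact (invStep_eq_one_iff σ i).mp e2
    have h2 : Matched (toSteps σ) i.val ((σ i : ℕ)) := matched_arc hσ hσc hup2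
    rw [← h] at h2
    exact Fin.ext (h1.unique_right h2)
  apply Equiv.ext
  intro i
  rcases lt_trichotomy i (π i) with hlt | heq | hgt
  · exact hup i hlt
  · -- fixed point
    have e1 : invStep π i = 0 := (invStep_eq_zero_iff π i).mpr heq.symm
    have e2 := invStep_eq_of_toSteps_eq h i
    rw [e1] at e2
    have := (invStep_eq_zero_iff σ i).mp e2.symm
    rw [← heq, this]
  · -- deficiency: use partner
    have hj : π i < i := hgt
    have hji : π (π i) = i := hπ i
    have hlt2 : π i < π (π i) := by rw [hji]; exact hj
    have := hup (π i) hlt2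
    rw [hji] at this
    -- this : i = σ (π i)
    have : σ (σ (π i)) = σ i := by rw [← this]
    rw [hσ (π i)] at this
    rw [← this]
  
end

end Stmt19Aux

namespace Stmt19Aux

open scoped Classical

noncomputable section

variable {n : ℕ}

lemma count3412_eq (n : ℕ) : count3412 n = motzkinNum n := by
  rw [count3412, motzkinNum]
  apply Nat.card_congr
  refine Equiv.ofBijective
    (fun p => ⟨toSteps p.1, isMotzkin_toSteps p.2.1, length_toSteps _⟩) ⟨?_, ?_⟩
  · rintro ⟨π, hπ, hπa⟩ ⟨σ, hσ, hσa⟩ he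
    simp only [Subtype.mk.injEq] at he ⊢
    exact eq_of_steps_eq_nc hπ hσ ((avoids3412_iff hπ).mp hπa) ((avoids3412_iff hσ).mp hσa) he
  · rintro ⟨l, hl, hlen⟩
    refine ⟨⟨ncPerm n l hl hlen, ncPerm_involutive l hl hlen,
      (avoids3412_iff (ncPerm_involutive l hl hlen)).mpr (ncPerm_noCross l hl hlen)⟩, ?_⟩
    simp only [Subtype.mk.injEq]
    exact toSteps_ncPerm l hl hlen

/-! ### up/down counts -/

def ucZ (l : List ℤ) (k : ℕ) : ℤ := ((l.map (fun x => if x = 1 then (1:ℤ) else 0)).take k).sum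
def dcZ (l : List ℤ) (k : ℕ) : ℤ := ((l.map (fun x => if x = -1 then (1:ℤ) else 0)).take k).sum

lemma ucZ_zero (l : List ℤ) : ucZ l 0 = 0 := rfl
lemma dcZ_zero (l : List ℤ) : dcZ l 0 = 0 := rfl

lemma ucZ_succ (l : List ℤ) (k : ℕ) (hk : k < l.length) :
    ucZ l (k + 1) = ucZ l k + (if l[k]'hk = 1 then 1 else 0) := by
  rw [ucZ, ucZ, List.sum_take_succ _ k (by simpa using hk), List.getElem_map]

lemma dcZ_succ (l : List ℤ) (k : ℕ) (hk : k < l.length) :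
    dcZ l (k + 1) = dcZ l k + (if l[k]'hk = -1 then 1 else 0) := by
  rw [dcZ, dcZ, List.sum_take_succ _ k (by simpa using hk), List.getElem_map]

lemma ucZ_of_le (l : List ℤ) {k : ℕ} (hk : l.length ≤ k) :
    ucZ l k = ucZ l l.length := by
  rw [ucZ, ucZ, List.take_of_length_le (by simpa using hk),
    List.take_of_length_le (by simp)]

lemma dcZ_of_le (l : List ℤ) {k : ℕ} (hk : l.length ≤ k) :
    dcZ l k = dcZ l l.length := by
  rw [dcZ, dcZ, List.take_of_length_le (by simpa using hk),
    List.take_of_length_le (by simp)]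

lemma ucZ_mono (l : List ℤ) : Monotone (ucZ l) := by
  apply monotone_nat_of_le_succ
  intro k
  rcases Nat.lt_or_ge k l.length with hk | hk
  · rw [ucZ_succ l k hk]
    split_ifs <;> omega
  · rw [ucZ_of_le l hk, ucZ_of_le l (show l.length ≤ k + 1 by omega)]

lemma dcZ_mono (l : List ℤ) : Monotone (dcZ l) := by
  apply monotone_nat_of_le_succ
  intro k
  rcases Nat.lt_or_ge k l.length with hk | hk
  · rw [dcZ_succ l k hk]
    split_ifs <;> omega
  · rw [dcZ_of_le l hk, dcZ_of_le l (show l.length ≤ k + 1 by omega)]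

lemma ucZ_nonneg (l : List ℤ) (k : ℕ) : 0 ≤ ucZ l k := by
  have := ucZ_mono l (Nat.zero_le k)
  rw [ucZ_zero] at this
  exact this

lemma dcZ_nonneg (l : List ℤ) (k : ℕ) : 0 ≤ dcZ l k := by
  have := dcZ_mono l (Nat.zero_le k)
  rw [dcZ_zero] at this
  exact this

lemma hsum_eq_uc_sub_dc {l : List ℤ} (hl : ∀ s ∈ l, s = 1 ∨ s = 0 ∨ s = -1) (k : ℕ) :
    hsum l k = ucZ l k - dcZ l k := by
  induction k with
  | zero => rw [hsum_zero, ucZ_zero, dcZ_zero]; ring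
  | succ k ih =>
    rcases Nat.lt_or_ge k l.length with hk | hk
    · rw [hsum_succ l k hk, ucZ_succ l k hk, dcZ_succ l k hk]
      rcases hl _ (List.getElem_mem hk) with h | h | h <;> rw [h] <;> norm_num <;> omega
    · rw [hsum_of_le l hk, hsum_of_le l (by omega: l.length ≤ k + 1), ucZ_of_le l hk,
        ucZ_of_le l (by omega : l.length ≤ k + 1), dcZ_of_le l hk,
        dcZ_of_le l (by omega : l.length ≤ k + 1)] at *
      exact ih

lemma uc_eq_dc_total {l : List ℤ} (hl : IsMotzkinPath l) :
    ucZ l l.length = dcZ l l.length := by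
  have h := hsum_eq_uc_sub_dc hl.1 l.length
  rw [hsum_length hl (le_refl _)] at h
  omega

lemma upAt_getElem {l : List ℤ} {i : ℕ} (h : upAt l i) : l[i]'h.1 = 1 := by
  have := hsum_succ l i h.1
  have := h.2
  omega

lemma downAt_getElem {l : List ℤ} {i : ℕ} (h : downAt l i) : l[i]'h.1 = -1 := by
  have := hsum_succ l i h.1
  have := h.2
  omega

lemma ucZ_succ_of_up {l : List ℤ} {i : ℕ} (h : upAt l i) : ucZ l (i + 1) = ucZ l i + 1 := by
  rw [ucZ_succ l i h.1, if_pos (upAt_getElem h)]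

lemma dcZ_succ_of_down {l : List ℤ} {i : ℕ} (h : downAt l i) : dcZ l (i + 1) = dcZ l i + 1 := by
  rw [dcZ_succ l i h.1, if_pos (downAt_getElem h)]

end

end Stmt19Aux

namespace Stmt19Aux

open scoped Classical

noncomputable section

def NNMatched (l : List ℤ) (i j : ℕ) : Prop :=
  i < j ∧ upAt l i ∧ downAt l j ∧ ucZ l (i + 1) = dcZ l (j + 1)

lemma NNMatched.unique_right {l : List ℤ} {i j j' : ℕ} (h : NNMatched l i j)
    (h' : NNMatched l i j') : j = j' := by
  by_contra hne
  rcases lt_or_gt_of_ne hne with hlt | hlt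
  · have h1 := dcZ_succ_of_down h'.2.2.1
    have h2 : dcZ l (j + 1) ≤ dcZ l j' := dcZ_mono l (by omega)
    have := h.2.2.2
    have := h'.2.2.2
    omega
  · have h1 := dcZ_succ_of_down h.2.2.1
    have h2 : dcZ l (j' + 1) ≤ dcZ l j := dcZ_mono l (by omega)
    have := h.2.2.2
    have := h'.2.2.2
    omega

lemma NNMatched.unique_left {l : List ℤ} {i i' j : ℕ} (h : NNMatched l i j)
    (h' : NNMatched l i' j) : i = i' := by
  by_contra hne
  rcases lt_or_gt_of_ne hne with hlt | hlt
  · have h1 := ucZ_succ_of_up h'.2.1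
    have h2 : ucZ l (i + 1) ≤ ucZ l i' := ucZ_mono l (by omega)
    have := h.2.2.2
    have := h'.2.2.2
    omega
  · have h1 := ucZ_succ_of_up h.2.1
    have h2 : ucZ l (i' + 1) ≤ ucZ l i := ucZ_mono l (by omega)
    have := h.2.2.2
    have := h'.2.2.2
    omega

lemma exists_nnmatched_of_up {l : List ℤ} (hl : IsMotzkinPath l) {i : ℕ} (h : upAt l i) :
    ∃ j, NNMatched l i j := by
  have hup := ucZ_succ_of_up h
  have hil := h.1
  obtain ⟨t, ht⟩ : ∃ t : ℤ, ucZ l (i + 1) = t := ⟨_, rfl⟩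
  rw [ht] at hup
  have htpos : 1 ≤ t := by
    have := ucZ_nonneg l i
    omega
  have htot : t ≤ dcZ l l.length := by
    have h1 : ucZ l (i + 1) ≤ ucZ l l.length := ucZ_mono l (by omega)
    have h2 := uc_eq_dc_total hl
    omega
  have hPw : t ≤ dcZ l ((l.length - 1) + 1) := by
    have he : l.length - 1 + 1 = l.length := by omega
    rw [he]
    exact htot
  have hP : ∃ j, t ≤ dcZ l (j + 1) := ⟨l.length - 1, hPw⟩
  obtain ⟨j, hPj, hmin, hfind⟩ :
      ∃ j, (t ≤ dcZ l (j + 1)) ∧ (∀ k, k < j → dcZ l (k + 1) < t) ∧ j ≤ l.length - 1 := by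
    refine ⟨Nat.find hP, Nat.find_spec hP, ?_, Nat.find_min' hP hPw⟩
    intro k hk
    have := Nat.find_min hP hk
    omega
  have hlen1 : l.length - 1 + 1 = l.length := by
    have := hil
    omega
  have hjl : j < l.length := by omega
  have hdj : dcZ l j < t := by
    rcases Nat.eq_zero_or_pos j with h0 | h0
    · subst h0; rw [dcZ_zero]; omega
    · have h5 := hmin (j - 1) (by omega)
      have he : j - 1 + 1 = j := by omega
      rw [he] at h5
      exact h5
  have hgj : l[j]'hjl = -1 := by
    by_contra hc
    rw [dcZ_succ l j hjl, if_neg hc] at hPj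
    omega
  have hdown : downAt l j := ⟨hjl, by
    have := hsum_succ l j hjl
    rw [hgj] at this
    omega⟩
  have hdeq : dcZ l (j + 1) = t := by
    rw [dcZ_succ l j hjl, if_pos hgj] at hPj ⊢
    omega
  have hij : i < j := by
    have hine : i ≠ j := by
      intro he
      have hstep := h.2
      rw [he] at hstep
      have := hdown.2
      omega
    rcases lt_or_gt_of_ne hine with hlt | hlt
    · exact hlt
    · exfalso
      have h1 : ucZ l (j + 1) ≤ ucZ l i := ucZ_mono l (by omega)
      have h2 := hsum_eq_uc_sub_dc hl.1 (j + 1)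
      have h3 := hsum_nonneg hl (j + 1)
      omega
  exact ⟨j, hij, h, hdown, by omega⟩

lemma exists_nnmatched_of_down {l : List ℤ} (hl : IsMotzkinPath l) {j : ℕ} (h : downAt l j) :
    ∃ i, NNMatched l i j := by
  have hdn := dcZ_succ_of_down h
  have hjl := h.1
  obtain ⟨t, ht⟩ : ∃ t : ℤ, dcZ l (j + 1) = t := ⟨_, rfl⟩
  rw [ht] at hdn
  have htpos : 1 ≤ t := by
    have h4 := dcZ_nonneg l j
    omega
  have htot : t ≤ ucZ l l.length := by
    have h1 : dcZ l (j + 1) ≤ dcZ l l.length := dcZ_mono l (by omega)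
    have h2 := uc_eq_dc_total hl
    omega
  have hPw : t ≤ ucZ l ((l.length - 1) + 1) := by
    have he : l.length - 1 + 1 = l.length := by omega
    rw [he]
    exact htot
  have hP : ∃ i, t ≤ ucZ l (i + 1) := ⟨l.length - 1, hPw⟩
  obtain ⟨i, hPi, hmin, hfind⟩ :
      ∃ i, (t ≤ ucZ l (i + 1)) ∧ (∀ k, k < i → ucZ l (k + 1) < t) ∧ i ≤ l.length - 1 := by
    refine ⟨Nat.find hP, Nat.find_spec hP, ?_, Nat.find_min' hP hPw⟩
    intro k hk
    have := Nat.find_min hP hk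
    omega
  have hlen1 : l.length - 1 + 1 = l.length := by
    have := hjl
    omega
  have hil : i < l.length := by omega
  have hui : ucZ l i < t := by
    rcases Nat.eq_zero_or_pos i with h0 | h0
    · subst h0; rw [ucZ_zero]; omega
    · have h5 := hmin (i - 1) (by omega)
      have he : i - 1 + 1 = i := by omega
      rw [he] at h5
      exact h5
  have hgi : l[i]'hil = 1 := by
    by_contra hc
    rw [ucZ_succ l i hil, if_neg hc] at hPi
    omega
  have hup : upAt l i := ⟨hil, by
    have := hsum_succ l i hil
    rw [hgi] at this
    omega⟩
  have hueq : ucZ l (i + 1) = t := by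
    rw [ucZ_succ l i hil, if_pos hgi] at hPi ⊢
    omega
  have hij : i < j := by
    have hine : i ≠ j := by
      intro he
      have hstep := h.2
      rw [← he] at hstep
      have := hup.2
      omega
    rcases lt_or_gt_of_ne hine with hlt | hlt
    · exact hlt
    · exfalso
      have h1 : dcZ l (j + 1) ≤ dcZ l i := dcZ_mono l (by omega)
      have h2 := hsum_eq_uc_sub_dc hl.1 i
      have h3 := hsum_nonneg hl i
      omega
  exact ⟨i, hij, hup, h, by omega⟩

end

end Stmt19Aux

namespace Stmt19Aux

open scoped Classical

noncomputable section

def nnFun (l : List ℤ) (i : ℕ) : ℕ :=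
  if h : ∃ j, NNMatched l i j then h.choose
  else if h : ∃ j, NNMatched l j i then h.choose
  else i

lemma nnFun_up {l : List ℤ} (hl : IsMotzkinPath l) {i : ℕ} (h : upAt l i) :
    NNMatched l i (nnFun l i) := by
  have he : ∃ j, NNMatched l i j := exists_nnmatched_of_up hl h
  rw [nnFun, dif_pos he]
  exact he.choose_spec

lemma nnFun_down {l : List ℤ} (hl : IsMotzkinPath l) {i : ℕ} (h : downAt l i) :
    NNMatched l (nnFun l i) i := by
  have hne : ¬ ∃ j, NNMatched l i j := by
    rintro ⟨j, hj⟩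
    have := hj.2.1.2
    have := h.2
    omega
  have he : ∃ j, NNMatched l j i := exists_nnmatched_of_down hl h
  rw [nnFun, dif_neg hne, dif_pos he]
  exact he.choose_spec

lemma nnFun_flat {l : List ℤ} (hl : IsMotzkinPath l) {i : ℕ} (h : flatAt l i) :
    nnFun l i = i := by
  have hne : ¬ ∃ j, NNMatched l i j := by
    rintro ⟨j, hj⟩
    have := hj.2.1.2
    have := h.2
    omega
  have hne' : ¬ ∃ j, NNMatched l j i := by
    rintro ⟨j, hj⟩
    have := hj.2.2.1.2
    have := h.2
    omega
  rw [nnFun, dif_neg hne, dif_neg hne']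

lemma nnFun_lt {l : List ℤ} (hl : IsMotzkinPath l) {i : ℕ} (hi : i < l.length) :
    nnFun l i < l.length := by
  rcases step_trichotomy hl hi with hu | hf | hd
  · exact (nnFun_up hl hu).2.2.1.1
  · rw [nnFun_flat hl hf]; exact hi
  · exact ((nnFun_down hl hd).1).trans hi

lemma nnFun_invol {l : List ℤ} (hl : IsMotzkinPath l) {i : ℕ} (hi : i < l.length) :
    nnFun l (nnFun l i) = i := by
  rcases step_trichotomy hl hi with hu | hf | hd
  · have hm := nnFun_up hl hu
    have hd2 : downAt l (nnFun l i) := hm.2.2.1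
    have hm2 := nnFun_down hl hd2
    exact hm2.unique_left hm
  · rw [nnFun_flat hl hf, nnFun_flat hl hf]
  · have hm := nnFun_down hl hd
    have hu2 : upAt l (nnFun l i) := hm.2.1
    have hm2 := nnFun_up hl hu2
    exact hm2.unique_right hm

def nnPerm (n : ℕ) (l : List ℤ) (hl : IsMotzkinPath l) (hlen : l.length = n) :
    Equiv.Perm (Fin n) :=
  Function.Involutive.toPerm
    (fun i => ⟨nnFun l i.val, by
      have h := nnFun_lt hl (show (i : ℕ) < l.length by rw [hlen]; exact i.isLt)
      rwa [hlen] at h⟩)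
    (fun i => Fin.ext
      (nnFun_invol hl (show (i : ℕ) < l.length by rw [hlen]; exact i.isLt)))

lemma nnPerm_apply {n : ℕ} (l : List ℤ) (hl : IsMotzkinPath l) (hlen : l.length = n)
    (i : Fin n) : ((nnPerm n l hl hlen) i : ℕ) = nnFun l i.val := rfl

lemma nnPerm_involutive {n : ℕ} (l : List ℤ) (hl : IsMotzkinPath l) (hlen : l.length = n) :
    Function.Involutive ⇑(nnPerm n l hl hlen) :=
  fun i => Fin.ext
    (nnFun_invol hl (show (i : ℕ) < l.length by rw [hlen]; exact i.isLt))

lemma toSteps_nnPerm {n : ℕ} (l : List ℤ) (hl : IsMotzkinPath l) (hlen : l.length = n) :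
    toSteps (nnPerm n l hl hlen) = l := by
  apply List.ext_getElem
  · simp [toSteps, hlen]
  intro k h1 h2
  unfold toSteps at h1 ⊢
  rw [List.getElem_ofFn]
  set i : Fin n := ⟨k, by simpa using h1⟩ with hidef
  have hkl : k < l.length := h2
  rcases step_trichotomy hl hkl with hu | hf | hd
  · have hm := nnFun_up hl hu
    have : i < nnPerm n l hl hlen i := by
      rw [Fin.lt_def, nnPerm_apply]
      exact hm.1
    rw [(invStep_eq_one_iff _ _).mpr this]
    have := hu.2
    have := hsum_succ l k hkl
    omega
  · have hnc := nnFun_flat hl hf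
    have : nnPerm n l hl hlen i = i := Fin.ext (by rw [nnPerm_apply]; exact hnc)
    rw [(invStep_eq_zero_iff _ _).mpr this]
    have := hf.2
    have := hsum_succ l k hkl
    omega
  · have hm := nnFun_down hl hd
    have : nnPerm n l hl hlen i < i := by
      rw [Fin.lt_def, nnPerm_apply]
      exact hm.1
    rw [(invStep_eq_negone_iff _ _).mpr this]
    have := hd.2
    have := hsum_succ l k hkl
    omega

lemma nnPerm_arc {n : ℕ} {l : List ℤ} (hl : IsMotzkinPath l) (hlen : l.length = n)
    {i : Fin n} (h : i < nnPerm n l hl hlen i) :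
    NNMatched l i.val ((nnPerm n l hl hlen i) : ℕ) := by
  have hkl : (i : ℕ) < l.length := by rw [hlen]; exact i.isLt
  rcases step_trichotomy hl hkl with hu | hf | hd
  · have hm := nnFun_up hl hu
    rwa [nnPerm_apply]
  · exfalso
    have := nnFun_flat hl hf
    rw [Fin.lt_def, nnPerm_apply, this] at h
    exact absurd h (lt_irrefl _)
  · exfalso
    have hm := nnFun_down hl hd
    rw [Fin.lt_def, nnPerm_apply] at h
    have := hm.1
    omega

lemma nnPerm_noNest {n : ℕ} (l : List ℤ) (hl : IsMotzkinPath l) (hlen : l.length = n) :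
    ¬ ∃ a b : Fin n, a < b ∧ b < (nnPerm n l hl hlen) b ∧
      (nnPerm n l hl hlen) b < (nnPerm n l hl hlen) a := by
  rintro ⟨a, b, hab, hbb, hba⟩
  set π := nnPerm n l hl hlen
  have haa : a < π a := hab.trans (hbb.trans hba)
  have hma : NNMatched l a.val ((π a : ℕ)) := nnPerm_arc hl hlen haa
  have hmb : NNMatched l b.val ((π b : ℕ)) := nnPerm_arc hl hlen hbb
  have h1 : ucZ l (b.val + 1) = ucZ l b.val + 1 := ucZ_succ_of_up hmb.2.1
  have h2 : ucZ l (a.val + 1) ≤ ucZ l b.val := ucZ_mono l (by have := Fin.lt_def.mp hab; omega)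
  have h3 : dcZ l ((π a : ℕ) + 1) = dcZ l (π a : ℕ) + 1 := dcZ_succ_of_down hma.2.2.1
  have h4 : dcZ l ((π b : ℕ) + 1) ≤ dcZ l (π a : ℕ) := dcZ_mono l (by have := Fin.lt_def.mp hba; omega)
  have e1 := hma.2.2.2
  have e2 := hmb.2.2.2
  omega

end

end Stmt19Aux

namespace Stmt19Aux

noncomputable section

variable {n : ℕ}

lemma toSteps_getElem (π : Equiv.Perm (Fin n)) {k : ℕ} (hk : k < (toSteps π).length) :
    (toSteps π)[k] = invStep π ⟨k, by simpa using hk⟩ := by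
  simp [toSteps]

lemma hsum_toSteps_succ (π : Equiv.Perm (Fin n)) (i : Fin n) :
    hsum (toSteps π) (i.val + 1) = hsum (toSteps π) i.val + invStep π i := by
  have hk : (i : ℕ) < (toSteps π).length := by simpa using i.isLt
  rw [hsum_succ _ _ hk, toSteps_getElem π hk]

lemma upAt_toSteps_iff (π : Equiv.Perm (Fin n)) (i : Fin n) :
    upAt (toSteps π) i.val ↔ i < π i := by
  have hs := hsum_toSteps_succ π i
  constructor
  · intro h
    have h2 := h.2
    have : invStep π i = 1 := by omega
    exact (invStep_eq_one_iff π i).mp this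
  · intro h
    refine ⟨by simpa using i.isLt, ?_⟩
    rw [(invStep_eq_one_iff π i).mpr h] at hs
    omega

lemma downAt_toSteps_iff (π : Equiv.Perm (Fin n)) (i : Fin n) :
    downAt (toSteps π) i.val ↔ π i < i := by
  have hs := hsum_toSteps_succ π i
  constructor
  · intro h
    have h2 := h.2
    have : invStep π i = -1 := by omega
    exact (invStep_eq_negone_iff π i).mp this
  · intro h
    refine ⟨by simpa using i.isLt, ?_⟩
    rw [(invStep_eq_negone_iff π i).mpr h] at hs
    omega

lemma ucZ_toSteps (π : Equiv.Perm (Fin n)) (k : ℕ) :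
    ucZ (toSteps π) k =
      ((Finset.univ.filter (fun x : Fin n => x.val < k ∧ x < π x)).card : ℤ) := by
  rw [ucZ, toSteps, List.map_ofFn, List.sum_take_ofFn]
  have he : ∀ j : Fin n, ((fun x : ℤ => if x = 1 then (1:ℤ) else 0) ∘ (fun i => invStep π i)) j
      = if j < π j then (1:ℤ) else 0 := by
    intro j
    simp only [Function.comp]
    by_cases hj : j < π j
    · rw [if_pos ((invStep_eq_one_iff π j).mpr hj), if_pos hj]
    · rw [if_neg (fun he => hj ((invStep_eq_one_iff π j).mp he)), if_neg hj]
  rw [Finset.sum_congr rfl (fun j _ => he j), Finset.sum_boole, Finset.filter_filter]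

lemma dcZ_toSteps (π : Equiv.Perm (Fin n)) (k : ℕ) :
    dcZ (toSteps π) k =
      ((Finset.univ.filter (fun x : Fin n => x.val < k ∧ π x < x)).card : ℤ) := by
  rw [dcZ, toSteps, List.map_ofFn, List.sum_take_ofFn]
  have he : ∀ j : Fin n, ((fun x : ℤ => if x = -1 then (1:ℤ) else 0) ∘ (fun i => invStep π i)) j
      = if π j < j then (1:ℤ) else 0 := by
    intro j
    simp only [Function.comp]
    by_cases hj : π j < j
    · rw [if_pos ((invStep_eq_negone_iff π j).mpr hj), if_pos hj]
    · rw [if_neg (fun he => hj ((invStep_eq_negone_iff π j).mp he)), if_neg hj]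
  rw [Finset.sum_congr rfl (fun j _ => he j), Finset.sum_boole, Finset.filter_filter]

lemma nn_arc {π : Equiv.Perm (Fin n)} (hπ : Function.Involutive ⇑π)
    (hnn : ¬ ∃ a b : Fin n, a < b ∧ b < π b ∧ π b < π a)
    {i : Fin n} (h : i < π i) :
    NNMatched (toSteps π) i.val ((π i : ℕ)) := by
  refine ⟨Fin.lt_def.mp h, (upAt_toSteps_iff π i).mpr h, ?_, ?_⟩
  · rw [show ((π i : ℕ)) = (π i).val from rfl]
    refine (downAt_toSteps_iff π (π i)).mpr ?_
    rw [hπ i]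
    exact h
  · rw [ucZ_toSteps, dcZ_toSteps]
    congr 1
    apply Finset.card_bij (fun x _ => π x)
    · intro x hx
      simp only [Finset.mem_filter, Finset.mem_univ, true_and] at hx ⊢
      obtain ⟨h1, h2⟩ := hx
      constructor
      · -- (π x).val < π i + 1
        rcases eq_or_ne x i with rfl | hne
        · omega
        · have hxi : x < i := Fin.lt_def.mpr (by
            have : x.val ≠ i.val := fun he => hne (Fin.ext he)
            omega)
          by_contra hc
          push_neg at hc
          have : π i < π x := Fin.lt_def.mpr (by omega)
          exact hnn ⟨x, i, hxi, h, this⟩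
      · rw [hπ x]; exact h2
    · intro a _ b _ hab
      exact π.injective hab
    · intro y hy
      simp only [Finset.mem_filter, Finset.mem_univ, true_and] at hy
      obtain ⟨h1, h2⟩ := hy
      refine ⟨π y, ?_, hπ y⟩
      simp only [Finset.mem_filter, Finset.mem_univ, true_and]
      constructor
      · -- (π y).val < i + 1
        rcases eq_or_ne y (π i) with rfl | hne
        · rw [hπ i]; omega
        · have hyi : y < π i := Fin.lt_def.mpr (by
            have : y.val ≠ (π i).val := fun he => hne (Fin.ext he)
            omega)
          by_contra hc
          push_neg at hc
          have hipy : i < π y := Fin.lt_def.mpr (by omega)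
          refine hnn ⟨i, π y, hipy, ?_, ?_⟩
          · rw [hπ y]; exact h2
          · rw [hπ y]; exact hyi
      · rw [hπ y]; exact h2

lemma eq_of_steps_eq_nn {π σ : Equiv.Perm (Fin n)}
    (hπ : Function.Involutive ⇑π) (hσ : Function.Involutive ⇑σ)
    (hπc : ¬ ∃ a b : Fin n, a < b ∧ b < π b ∧ π b < π a)
    (hσc : ¬ ∃ a b : Fin n, a < b ∧ b < σ b ∧ σ b < σ a)
    (h : toSteps π = toSteps σ) : π = σ := by
  have hup : ∀ i : Fin n, i < π i → π i = σ i := by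
    intro i hi
    have h1 : NNMatched (toSteps π) i.val ((π i : ℕ)) := nn_arc hπ hπc hi
    have hup2 : i < σ i := by
      have e1 : invStep π i = 1 := (invStep_eq_one_iff π i).mpr hi
      have e2 : invStep σ i = invStep π i := (invStep_eq_of_toSteps_eq h i).symm
      rw [e1] at e2
      exact (invStep_eq_one_iff σ i).mp e2
    have h2 : NNMatched (toSteps σ) i.val ((σ i : ℕ)) := nn_arc hσ hσc hup2
    rw [← h] at h2
    exact Fin.ext (h1.unique_right h2)
  apply Equiv.ext
  intro i
  rcases lt_trichotomy i (π i) with hlt | heq | hgt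
  · exact hup i hlt
  · have e1 : invStep π i = 0 := (invStep_eq_zero_iff π i).mpr heq.symm
    have e2 := invStep_eq_of_toSteps_eq h i
    rw [e1] at e2
    have := (invStep_eq_zero_iff σ i).mp e2.symm
    rw [← heq, this]
  · have hj : π i < i := hgt
    have hji : π (π i) = i := hπ i
    have hlt2 : π i < π (π i) := by rw [hji]; exact hj
    have := hup (π i) hlt2
    rw [hji] at this
    have : σ (σ (π i)) = σ i := by rw [← this]
    rw [hσ (π i)] at this
    rw [← this]

lemma count4321_eq (n : ℕ) : count4321 n = motzkinNum n := by
  rw [count4321, motzkinNum]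
  apply Nat.card_congr
  refine Equiv.ofBijective
    (fun p => ⟨toSteps p.1, isMotzkin_toSteps p.2.1, length_toSteps _⟩) ⟨?_, ?_⟩
  · rintro ⟨π, hπ, hπa⟩ ⟨σ, hσ, hσa⟩ he
    simp only [Subtype.mk.injEq] at he ⊢
    exact eq_of_steps_eq_nn hπ hσ ((avoids4321_iff hπ).mp hπa) ((avoids4321_iff hσ).mp hσa) he
  · rintro ⟨l, hl, hlen⟩
    refine ⟨⟨nnPerm n l hl hlen, nnPerm_involutive l hl hlen,
      (avoids4321_iff (nnPerm_involutive l hl hlen)).mpr (nnPerm_noNest l hl hlen)⟩, ?_⟩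
    simp only [Subtype.mk.injEq]
    exact toSteps_nnPerm l hl hlen

end

end Stmt19Aux

namespace Stmt19Aux

noncomputable section

variable {n : ℕ}

lemma conn_iff {π : Equiv.Perm (Fin n)} (hπ : Function.Involutive ⇑π) :
    IsConnectedPerm π ↔ ∀ k, 0 < k → k < n → heightUpTo π k ≠ 0 := by
  rw [IsConnectedPerm]
  constructor
  · intro h k hk0 hkn hzero
    apply h
    refine ⟨k, hk0, hkn, ?_⟩
    intro i hi
    by_contra hc
    push_neg at hc
    have hmem : i ∈ Finset.univ.filter
        (fun x : Fin n => x.val < k ∧ x < π x ∧ k ≤ (π x).val) := by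
      simp only [Finset.mem_filter, Finset.mem_univ, true_and]
      exact ⟨hi, Fin.lt_def.mpr (lt_of_lt_of_le hi hc), hc⟩
    have hcard := height_eq_card hπ k
    rw [hzero] at hcard
    have hc0 : (Finset.univ.filter
        (fun x : Fin n => x.val < k ∧ x < π x ∧ k ≤ (π x).val)).card = 0 := by
      exact_mod_cast hcard.symm
    rw [Finset.card_eq_zero] at hc0
    rw [hc0] at hmem
    exact absurd hmem (Finset.notMem_empty i)
  · rintro h ⟨k, hk0, hkn, hdec⟩
    apply h k hk0 hkn
    rw [height_eq_card hπ]
    have he : (Finset.univ.filter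
        (fun x : Fin n => x.val < k ∧ x < π x ∧ k ≤ (π x).val)) = ∅ := by
      ext x
      simp only [Finset.mem_filter, Finset.mem_univ, true_and, Finset.notMem_empty, iff_false]
      rintro ⟨h1, _, h3⟩
      exact absurd (hdec x h1) (not_lt.mpr h3)
    rw [he]
    simp

def midSteps (π : Equiv.Perm (Fin (n + 2))) : List ℤ :=
  List.ofFn (fun i : Fin n => invStep π ⟨i.val + 1, by omega⟩)

@[simp] lemma length_midSteps (π : Equiv.Perm (Fin (n + 2))) : (midSteps π).length = n := by
  simp [midSteps]

lemma hsum_midSteps (π : Equiv.Perm (Fin (n + 2))) {k : ℕ} (hk : k ≤ n) :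
    hsum (midSteps π) k = heightUpTo π (k + 1) - heightUpTo π 1 := by
  induction k with
  | zero => rw [hsum_zero]; ring
  | succ k ih =>
    have hkn : k < n := hk
    have h1 : hsum (midSteps π) (k + 1) = hsum (midSteps π) k + invStep π ⟨k + 1, by omega⟩ := by
      rw [hsum_succ _ k (by simpa using hkn)]
      congr 1
      simp [midSteps]
    have h2 := heightUpTo_succ π (k + 1) (by omega)
    rw [h1, ih (by omega)]
    rw [show (⟨k + 1, by omega⟩ : Fin (n + 2)) = ⟨k + 1, by omega⟩ from rfl] at h2 ⊢
    omega

lemma heightUpTo_succ_bounds (π : Equiv.Perm (Fin n)) {k : ℕ} (hk : k < n) :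
    heightUpTo π k - 1 ≤ heightUpTo π (k + 1) ∧ heightUpTo π (k + 1) ≤ heightUpTo π k + 1 := by
  have h1 := heightUpTo_succ π k hk
  have hcs := invStep_cases π ⟨k, hk⟩
  omega

lemma invStep_eq_diff (π : Equiv.Perm (Fin n)) (i : Fin n) :
    invStep π i = heightUpTo π (i.val + 1) - heightUpTo π i.val := by
  have h := heightUpTo_succ π i.val i.isLt
  rw [Fin.eta] at h
  omega

lemma heightUpTo_one_of_conn {π : Equiv.Perm (Fin (n + 2))} (hπ : Function.Involutive ⇑π)
    (hc : IsConnectedPerm π) : heightUpTo π 1 = 1 := by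
  have hb := heightUpTo_succ_bounds π (show 0 < n + 2 by omega)
  rw [show 0 + 1 = 1 by omega, heightUpTo_zero] at hb
  have hne := (conn_iff hπ).mp hc 1 one_pos (by omega)
  have hnn := heightUpTo_nonneg hπ 1
  omega

lemma heightUpTo_last_of_conn {π : Equiv.Perm (Fin (n + 2))} (hπ : Function.Involutive ⇑π)
    (hc : IsConnectedPerm π) : heightUpTo π (n + 1) = 1 := by
  have hb := heightUpTo_succ_bounds π (show n + 1 < n + 2 by omega)
  have hb2 : heightUpTo π (n + 1) - 1 ≤ heightUpTo π (n + 2) ∧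
      heightUpTo π (n + 2) ≤ heightUpTo π (n + 1) + 1 := hb
  have hL : heightUpTo π (n + 2) = 0 := heightUpTo_length hπ
  have hne := (conn_iff hπ).mp hc (n + 1) (by omega) (by omega)
  have hnn := heightUpTo_nonneg hπ (n + 1)
  omega

lemma isMotzkin_midSteps {π : Equiv.Perm (Fin (n + 2))} (hπ : Function.Involutive ⇑π)
    (hc : IsConnectedPerm π) : IsMotzkinPath (midSteps π) := by
  refine ⟨?_, ?_, ?_⟩
  · intro s hs
    rw [midSteps, List.mem_ofFn] at hs
    obtain ⟨i, rfl⟩ := hs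
    exact invStep_cases π _
  · have h1 : hsum (midSteps π) n = (midSteps π).sum := by
      rw [hsum_of_le _ (by simp)]
    rw [← h1, hsum_midSteps π (le_refl n), heightUpTo_last_of_conn hπ hc,
      heightUpTo_one_of_conn hπ hc]
    ring
  · intro p hp
    rw [List.prefix_iff_eq_take] at hp
    have hplen : p.length ≤ n := by
      have h5 := congrArg List.length hp
      rw [List.length_take] at h5
      simp only [length_midSteps] at h5
      omega
    rw [hp]
    have h2 : hsum (midSteps π) p.length = heightUpTo π (p.length + 1) - 1 := by
      rw [hsum_midSteps π hplen, heightUpTo_one_of_conn hπ hc]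
    have h3 : heightUpTo π (p.length + 1) ≠ 0 :=
      (conn_iff hπ).mp hc (p.length + 1) (by omega) (by omega)
    have h4 := heightUpTo_nonneg hπ (p.length + 1)
    show (0:ℤ) ≤ hsum (midSteps π) p.length
    omega

end

end Stmt19Aux

namespace Stmt19Aux

noncomputable section

variable {n : ℕ}

lemma invStep_congr_heights {π σ : Equiv.Perm (Fin n)} (i : Fin n)
    (h1 : heightUpTo π i.val = heightUpTo σ i.val)
    (h2 : heightUpTo π (i.val + 1) = heightUpTo σ (i.val + 1)) :
    invStep π i = invStep σ i := by
  have d1 := invStep_eq_diff π i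
  have d2 := invStep_eq_diff σ i
  omega

lemma steps_eq_of_mid_eq {π σ : Equiv.Perm (Fin (n + 2))}
    (hπ : Function.Involutive ⇑π) (hσ : Function.Involutive ⇑σ)
    (hcπ : IsConnectedPerm π) (hcσ : IsConnectedPerm σ)
    (h : midSteps π = midSteps σ) : toSteps π = toSteps σ := by
  have key : ∀ j, j ≤ n + 2 → heightUpTo π j = heightUpTo σ j := by
    intro j hj
    rcases Nat.eq_zero_or_pos j with rfl | hp
    · rw [heightUpTo_zero, heightUpTo_zero]
    rcases Nat.lt_or_ge j (n + 2) with hlt | hge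
    · have e1 := hsum_midSteps π (show j - 1 ≤ n by omega)
      have e2 := hsum_midSteps σ (show j - 1 ≤ n by omega)
      rw [h] at e1
      rw [show j - 1 + 1 = j by omega] at e1 e2
      rw [heightUpTo_one_of_conn hπ hcπ] at e1
      rw [heightUpTo_one_of_conn hσ hcσ] at e2
      omega
    · have hj2 : j = n + 2 := by omega
      subst hj2
      rw [heightUpTo_length hπ, heightUpTo_length hσ]
  apply List.ext_getElem
  · simp
  intro k h1 h2
  rw [toSteps_getElem π h1, toSteps_getElem σ h2]
  have hk2 : k < n + 2 := by simpa using h1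
  exact invStep_congr_heights _ (key k (by omega)) (key (k + 1) (by omega))

/-! ### Extension of a Motzkin path -/

def extList (m : List ℤ) : List ℤ := 1 :: (m ++ [-1])

lemma extList_length (m : List ℤ) : (extList m).length = m.length + 2 := by
  simp [extList]

lemma hsum_extList_succ (m : List ℤ) {k : ℕ} (hk : k ≤ m.length) :
    hsum (extList m) (k + 1) = 1 + hsum m k := by
  rw [hsum, extList, List.take_succ_cons, List.sum_cons,
    List.take_append_of_le_length hk]
  rfl

lemma isMotzkin_extList {m : List ℤ} (hm : IsMotzkinPath m) :
    IsMotzkinPath (extList m) := by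
  have htop : hsum (extList m) (m.length + 2) = 0 := by
    rw [hsum_of_le _ (by rw [extList_length])]
    simp [extList, List.sum_append, hm.2.1]
  refine ⟨?_, ?_, ?_⟩
  · intro s hs
    simp only [extList, List.mem_cons, List.mem_append, List.mem_singleton] at hs
    rcases hs with rfl | hs | hs2
    · left; rfl
    · exact hm.1 s hs
    · rcases hs2 with rfl | h0
      · right; right; rfl
      · exact absurd h0 List.not_mem_nil
  · have := htop
    rw [hsum_of_le _ (by rw [extList_length])] at this
    exact this
  · intro p hp
    rw [List.prefix_iff_eq_take] at hp
    have hplen : p.length ≤ m.length + 2 := by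
      have h5 := congrArg List.length hp
      rw [List.length_take, extList_length] at h5
      omega
    rw [hp]
    show (0:ℤ) ≤ hsum (extList m) p.length
    rcases Nat.eq_zero_or_pos p.length with he | hp0
    · rw [he, hsum_zero]
    obtain ⟨j, hj⟩ : ∃ j, p.length = j + 1 := ⟨p.length - 1, by omega⟩
    rw [hj]
    rcases Nat.lt_or_ge j (m.length + 1) with hjm | hjm
    · rw [hsum_extList_succ m (by omega)]
      have := hsum_nonneg hm j
      omega
    · have he2 : j + 1 = m.length + 2 := by omega
      rw [he2, htop]

lemma conn_of_toSteps_ext {m : List ℤ} (hm : IsMotzkinPath m)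
    {π : Equiv.Perm (Fin (m.length + 2))} (hπ : Function.Involutive ⇑π)
    (h : toSteps π = extList m) : IsConnectedPerm π := by
  rw [conn_iff hπ]
  intro k hk0 hkn
  have e := hsum_toSteps π k
  rw [h] at e
  obtain ⟨j, rfl⟩ : ∃ j, k = j + 1 := ⟨k - 1, by omega⟩
  rw [hsum_extList_succ m (by omega)] at e
  have := hsum_nonneg hm j
  omega

lemma mid_of_toSteps_ext {m : List ℤ} {π : Equiv.Perm (Fin (m.length + 2))}
    (h : toSteps π = extList m) : midSteps π = m := by
  apply List.ext_getElem
  · simp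
  intro k h1 h2
  have hkm : k < m.length := h2
  simp only [midSteps, List.getElem_ofFn]
  have hH : ∀ j, heightUpTo π j = hsum (extList m) j := fun j => by rw [← h, hsum_toSteps]
  have hp : k + 1 < m.length + 2 := by omega
  have d : invStep π ⟨k + 1, hp⟩ = heightUpTo π (k + 2) - heightUpTo π (k + 1) :=
    invStep_eq_diff π ⟨k + 1, hp⟩
  have hm1 : hsum (extList m) (k + 1) = 1 + hsum m k := hsum_extList_succ m (le_of_lt hkm)
  have hm2 : hsum (extList m) (k + 2) = 1 + hsum m (k + 1) :=
    hsum_extList_succ m (show k + 1 ≤ m.length by omega)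
  have hms : hsum m (k + 1) = hsum m k + m[k]'hkm := hsum_succ m k hkm
  have hH1 := hH (k + 1)
  have hH2 := hH (k + 2)
  show invStep π ⟨k + 1, hp⟩ = m[k]'hkm
  omega

end

end Stmt19Aux

namespace Stmt19Aux

noncomputable section

lemma connCount3412_eq (n : ℕ) : connCount3412 (n + 2) = motzkinNum n := by
  rw [connCount3412, motzkinNum]
  apply Nat.card_congr
  refine Equiv.ofBijective
    (fun p => ⟨midSteps p.1, isMotzkin_midSteps p.2.1 p.2.2.2, length_midSteps _⟩) ⟨?_, ?_⟩
  · rintro ⟨π, hπ, hπa, hπc⟩ ⟨σ, hσ, hσa, hσc⟩ he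
    simp only [Subtype.mk.injEq] at he ⊢
    exact eq_of_steps_eq_nc hπ hσ ((avoids3412_iff hπ).mp hπa) ((avoids3412_iff hσ).mp hσa)
      (steps_eq_of_mid_eq hπ hσ hπc hσc he)
  · rintro ⟨m, hm, hlen⟩
    subst hlen
    have hl' : IsMotzkinPath (extList m) := isMotzkin_extList hm
    have hlen' : (extList m).length = m.length + 2 := extList_length m
    have hts : toSteps (ncPerm (m.length + 2) (extList m) hl' hlen') = extList m :=
      toSteps_ncPerm _ hl' hlen'
    have hinv := ncPerm_involutive (extList m) hl' hlen'
    refine ⟨⟨ncPerm (m.length + 2) (extList m) hl' hlen', hinv,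
      (avoids3412_iff hinv).mpr (ncPerm_noCross _ hl' hlen'),
      conn_of_toSteps_ext hm hinv hts⟩, ?_⟩
    simp only [Subtype.mk.injEq]
    exact mid_of_toSteps_ext hts

lemma connCount4321_eq (n : ℕ) : connCount4321 (n + 2) = motzkinNum n := by
  rw [connCount4321, motzkinNum]
  apply Nat.card_congr
  refine Equiv.ofBijective
    (fun p => ⟨midSteps p.1, isMotzkin_midSteps p.2.1 p.2.2.2, length_midSteps _⟩) ⟨?_, ?_⟩
  · rintro ⟨π, hπ, hπa, hπc⟩ ⟨σ, hσ, hσa, hσc⟩ he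
    simp only [Subtype.mk.injEq] at he ⊢
    exact eq_of_steps_eq_nn hπ hσ ((avoids4321_iff hπ).mp hπa) ((avoids4321_iff hσ).mp hσa)
      (steps_eq_of_mid_eq hπ hσ hπc hσc he)
  · rintro ⟨m, hm, hlen⟩
    subst hlen
    have hl' : IsMotzkinPath (extList m) := isMotzkin_extList hm
    have hlen' : (extList m).length = m.length + 2 := extList_length m
    have hts : toSteps (nnPerm (m.length + 2) (extList m) hl' hlen') = extList m :=
      toSteps_nnPerm _ hl' hlen'
    have hinv := nnPerm_involutive (extList m) hl' hlen'
    refine ⟨⟨nnPerm (m.length + 2) (extList m) hl' hlen', hinv,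
      (avoids4321_iff hinv).mpr (nnPerm_noNest _ hl' hlen'),
      conn_of_toSteps_ext hm hinv hts⟩, ?_⟩
    simp only [Subtype.mk.injEq]
    exact mid_of_toSteps_ext hts

end

end Stmt19Aux

/-- 3412-avoiding and 4321-avoiding involutions of length `n` are equinumerous and
counted by the Motzkin number `M_n`; moreover the connected (irreducible)
involutions of length `n + 2` in either class are also equinumerous, counted by
`M_n` (this is the statement that the generating function of the irreducible
involutions in either class is `(f(x)+1)x²`). -/
theorem stmt19 :
    (∀ n : ℕ, count3412 n = count4321 n) ∧
    (∀ n : ℕ, count4321 n = motzkinNum n) ∧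
    (∀ n : ℕ, connCount3412 (n + 2) = motzkinNum n) ∧
    (∀ n : ℕ, connCount4321 (n + 2) = motzkinNum n) := by
  refine ⟨?_, ?_, ?_, ?_⟩ <;> intro n
  · rw [Stmt19Aux.count3412_eq, Stmt19Aux.count4321_eq]
  · exact Stmt19Aux.count4321_eq n
  · exact Stmt19Aux.connCount3412_eq n
  · exact Stmt19Aux.connCount4321_eq n
end
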